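/- arXiv:1906.09880 — 9 statements merged into one kernel-verified Lean document; each statement's English description precedes it below -/
import Mathlib

section
/- For every pricing policy π, every time t ∈ {0,…,T} and every state s ∈ ℕ, the state-value function of the original MDP equals the expectation over lengths of the state–length value function of the modified MDP: U^π(t,s) = Σ_{ℓ=1}^{𝕃} P(ℓ)·W^π(t,s,ℓ). -/
/-- For every pricing policy π, every time t ∈ {0,…,T} and every state s ∈ ℕ,
the state-value function of the original MDP equals the expectation over lengths of the
state–length value function of the modified MDP. -/
theorem stmt_0
    (T L : ℕ) (hL : 1 ≤ L)
    (P : ℕ → ℝ) (hPnn : ∀ ℓ, 0 ≤ P ℓ)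
    (hPsum : ∑ ℓ ∈ Finset.Icc 1 L, P ℓ = 1)
    (𝒱 : Set ℝ) (h𝒱 : ∀ μ ∈ 𝒱, 0 ≤ μ)
    (q : ℝ → ℕ → ℕ → ℝ) (hq01 : ∀ μ s ℓ, 0 ≤ q μ s ℓ ∧ q μ s ℓ ≤ 1)
    (π : ℕ → ℕ → ℕ → ℝ) (hπ : ∀ t s ℓ, π t s ℓ ∈ 𝒱)
    (U : ℕ → ℕ → ℝ) (W : ℕ → ℕ → ℕ → ℝ)
    (hUT : ∀ s, U T s = 0)
    (hU : ∀ t, t < T → ∀ s, U t s =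
      ∑ ℓ ∈ Finset.Icc 1 L, P ℓ *
        (q (π t s ℓ) s ℓ * (π t s ℓ + U (t + 1) (s + ℓ - 1)) +
          (1 - q (π t s ℓ) s ℓ) * U (t + 1) (s - 1)))
    (hWT : ∀ s ℓ, W T s ℓ = 0)
    (hW : ∀ t, t < T → ∀ s ℓ, W t s ℓ =
      q (π t s ℓ) s ℓ *
          (π t s ℓ + ∑ ℓ' ∈ Finset.Icc 1 L, P ℓ' * W (t + 1) (s + ℓ - 1) ℓ') +
        (1 - q (π t s ℓ) s ℓ) * ∑ ℓ' ∈ Finset.Icc 1 L, P ℓ' * W (t + 1) (s - 1) ℓ') :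
    ∀ t, t ≤ T → ∀ s : ℕ, U t s = ∑ ℓ ∈ Finset.Icc 1 L, P ℓ * W t s ℓ := by
  intro t ht s
  induction' h : T - t with k ih generalizing t s
  · have : t = T := by omega
    subst this
    simp [hUT, hWT]
  · have htT : t < T := by omega
    rw [hU t htT s]
    refine Finset.sum_congr rfl fun ℓ _ => ?_
    rw [hW t htT s ℓ,
      ih (t + 1) (by omega) (s + ℓ - 1) (by omega),
      ih (t + 1) (by omega) (s - 1) (by omega)]
end

section
/- Let f : ℝ → ℝ be positive and nonincreasing with x ↦ log f(x) concave on ℝ. Then for all reals 0 ≤ x ≤ x' and 0 < γ ≤ γ': f(x/γ)·f(x'/γ') ≥ f(x'/γ)·f(x/γ'). (Equivalently, for scaled random variables with log-concave survival function f, the ratio f(x'/γ)/f(x/γ) is nondecreasing in the scale γ.) -/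
/-- Four-point inequality for a concave nonincreasing function. -/
lemma concave_four_point (g : ℝ → ℝ)
    (hconc : ConcaveOn ℝ Set.univ g)
    (hmono : ∀ u v : ℝ, u ≤ v → g v ≤ g u)
    (a b c d : ℝ) (hab : a ≤ b) (hac : a ≤ c) (hbd : b ≤ d) (hcd : c ≤ d)
    (hsum : b + c ≤ a + d) :
    g a + g d ≤ g b + g c := by
  rcases eq_or_lt_of_le (hab.trans hbd) with h | h
  · have hb : b = a := le_antisymm (h ▸ hbd) hab
    have hc : c = a := le_antisymm (h ▸ hcd) hac
    rw [hb, hc, ← h]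
  · set t := (d - b) / (d - a) with ht
    set s := (d - c) / (d - a) with hs
    have hda : 0 < d - a := by linarith
    have ht0 : 0 ≤ t := div_nonneg (by linarith) hda.le
    have ht1 : t ≤ 1 := (div_le_one hda).2 (by linarith)
    have hs0 : 0 ≤ s := div_nonneg (by linarith) hda.le
    have hs1 : s ≤ 1 := (div_le_one hda).2 (by linarith)
    have hb : t * a + (1 - t) * d = b := by
      rw [ht]; linear_combination -(div_mul_cancel₀ (d - b) hda.ne')
    have hcc : s * a + (1 - s) * d = c := by
      rw [hs]; linear_combination -(div_mul_cancel₀ (d - c) hda.ne')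
    have h1 : t * g a + (1 - t) * g d ≤ g b := by
      have := hconc.2 (Set.mem_univ a) (Set.mem_univ d) ht0
        (by linarith : (0:ℝ) ≤ 1 - t) (by ring : t + (1 - t) = 1)
      simpa [smul_eq_mul, hb] using this
    have h2 : s * g a + (1 - s) * g d ≤ g c := by
      have := hconc.2 (Set.mem_univ a) (Set.mem_univ d) hs0
        (by linarith : (0:ℝ) ≤ 1 - s) (by ring : s + (1 - s) = 1)
      simpa [smul_eq_mul, hcc] using this
    have hts : 1 ≤ t + s := by
      rw [ht, hs, ← add_div, le_div_iff₀ hda]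
      linarith
    have hgad : g d ≤ g a := hmono a d (by linarith)
    nlinarith [mul_nonneg (by linarith : (0:ℝ) ≤ t + s - 1) (by linarith : (0:ℝ) ≤ g a - g d)]

/-- Scaling case of Lemma 2: for a positive nonincreasing `f` with concave
logarithm, `f(x/γ)·f(x'/γ') ≥ f(x'/γ)·f(x/γ')` whenever `0 ≤ x ≤ x'` and `0 < γ ≤ γ'`. -/
theorem stmt_2
    (f : ℝ → ℝ) (hpos : ∀ x, 0 < f x)
    (hmono : ∀ x y : ℝ, x ≤ y → f y ≤ f x)
    (hconc : ConcaveOn ℝ Set.univ fun x => Real.log (f x))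
    (x x' γ γ' : ℝ) (hx0 : 0 ≤ x) (hx : x ≤ x') (hγ0 : 0 < γ) (hγ : γ ≤ γ') :
    f (x' / γ) * f (x / γ') ≤ f (x / γ) * f (x' / γ') := by
  have hγ'0 : 0 < γ' := lt_of_lt_of_le hγ0 hγ
  have hgm : ∀ u v : ℝ, u ≤ v → Real.log (f v) ≤ Real.log (f u) :=
    fun u v huv => Real.log_le_log (hpos v) (hmono u v huv)
  have hsum : x / γ + x' / γ' ≤ x / γ' + x' / γ := by
    rw [div_add_div _ _ hγ0.ne' hγ'0.ne', div_add_div _ _ hγ'0.ne' hγ0.ne',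
      div_le_div_iff₀ (by positivity) (by positivity)]
    nlinarith [mul_nonneg (mul_nonneg (mul_pos hγ0 hγ'0).le (sub_nonneg.2 hx))
      (sub_nonneg.2 hγ)]
  have key := concave_four_point (fun x => Real.log (f x)) hconc hgm
    (x / γ') (x / γ) (x' / γ') (x' / γ)
    (div_le_div_of_nonneg_left hx0 hγ0 hγ)
    (by gcongr)
    (by gcongr)
    (div_le_div_of_nonneg_left (hx0.trans hx) hγ0 hγ)
    hsum
  rw [← Real.log_le_log_iff (mul_pos (hpos _) (hpos _)) (mul_pos (hpos _) (hpos _)),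
    Real.log_mul (ne_of_gt (hpos _)) (ne_of_gt (hpos _)),
    Real.log_mul (ne_of_gt (hpos _)) (ne_of_gt (hpos _))]
  linarith [key]
end

section
/- Let p : ℤ → ℝ be a probability mass function (p ≥ 0, Σ_k p(k) = 1) with p(k) = 0 for k < 0, whose support {k : p(k) > 0} is an interval of integers, and which is discretely log-concave: p(x)² ≥ p(x−1)·p(x+1) for all x ∈ ℤ. Then both the cumulative mass function P(y) := Σ_{k ≤ y} p(k) and the survival mass function P̄(y) := Σ_{k ≥ y} p(k) are discretely log-concave: P(y)² ≥ P(y−1)·P(y+1) and P̄(y)² ≥ P̄(y−1)·P̄(y+1) for all y ∈ ℤ. -/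
section aux
variable (p : ℤ → ℝ)

lemma tele_aux (f : ℤ → ℝ) (y : ℤ) : ∀ n : ℕ,
    ∑ k ∈ Finset.Icc y (y + (n:ℤ)), f k = f y + ∑ k ∈ Finset.Icc (y+1) (y + (n:ℤ)), f k := by
  intro n
  have h1 : Finset.Icc y (y + (n:ℤ)) = insert y (Finset.Icc (y+1) (y + (n:ℤ))) := by
    ext k; simp only [Finset.mem_Icc, Finset.mem_insert]; omega
  rw [h1, Finset.sum_insert (by simp)]

/-- telescoping upward -/
lemma tele1 (f : ℤ → ℝ) (y : ℤ) (hy : 0 ≤ y) :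
    ∑ k ∈ Finset.Icc (0:ℤ) y, (f (k+1) - f k) = f (y+1) - f 0 := by
  suffices h : ∀ n : ℕ, ∑ k ∈ Finset.Icc (0:ℤ) (n:ℤ), (f (k+1) - f k) = f ((n:ℤ)+1) - f 0 by
    have := h y.toNat
    rwa [Int.toNat_of_nonneg hy] at this
  intro n
  induction n with
  | zero => simp
  | succ n ih =>
      have h1 : Finset.Icc (0:ℤ) ((n:ℤ)+1) = insert ((n:ℤ)+1) (Finset.Icc (0:ℤ) (n:ℤ)) := by
        ext k; simp only [Finset.mem_Icc, Finset.mem_insert]; omega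
      push_cast
      rw [h1, Finset.sum_insert (by simp), ih]
      ring

/-- telescoping downward -/
lemma tele2 (f : ℤ → ℝ) (y N : ℤ) (h : y ≤ N) :
    ∑ k ∈ Finset.Icc y N, (f (k-1) - f k) = f (y-1) - f N := by
  suffices hh : ∀ n : ℕ, ∑ k ∈ Finset.Icc y (y+(n:ℤ)), (f (k-1) - f k) = f (y-1) - f (y+(n:ℤ)) by
    have := hh (N - y).toNat
    rw [Int.toNat_of_nonneg (by omega)] at this
    rwa [show y + (N - y) = N by ring] at this
  intro n
  induction n with
  | zero => simp
  | succ n ih =>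
      have h1 : Finset.Icc y (y+((n:ℤ)+1)) = insert (y+(n:ℤ)+1) (Finset.Icc y (y+(n:ℤ))) := by
        ext k; simp only [Finset.mem_Icc, Finset.mem_insert]; omega
      push_cast
      rw [h1, Finset.sum_insert (by simp [Finset.mem_Icc]), ih]
      ring

variable (hp0 : ∀ k, 0 ≤ p k)
  (hsupp : ∀ a b c : ℤ, 0 < p a → 0 < p b → a ≤ c → c ≤ b → 0 < p c)
  (hlc : ∀ x : ℤ, p (x - 1) * p (x + 1) ≤ p x ^ 2)

include hp0 hsupp hlc in
lemma down_key (y : ℤ) (hy : 0 < p y) (hy1 : 0 < p (y+1)) :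
    ∀ n : ℕ, p (y - n) * p (y+1) ≤ p (y - n + 1) * p y := by
  intro n
  induction n with
  | zero => simp [mul_comm]
  | succ n ih =>
      have e1 : y - ((n:ℤ)+1) = y - n - 1 := by ring
      push_cast
      rw [e1]
      set a : ℤ := y - n - 1 with ha
      have hay : a + 1 ≤ y := by omega
      by_cases h1 : p (a+1) = 0
      · have hpa : p a = 0 := by
          by_contra h
          have := hsupp a y (a+1) ((hp0 a).lt_of_ne' h) hy (by omega) hay
          exact h1.symm.not_gt (by linarith) |>.elim
        simp [hpa, mul_nonneg (hp0 _) (hp0 _)]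
      · have h1' : 0 < p (a+1) := (hp0 _).lt_of_ne' h1
        have ih' : p (a+1) * p (y+1) ≤ p (a+2) * p y := by
          have e3 : y - (n:ℤ) + 1 = a + 2 := by omega
          have e2 : y - (n:ℤ) = a + 1 := by omega
          rw [e3, e2] at ih; exact ih
        by_cases h2 : p (a+2) = 0
        · exfalso
          have : p (a+1) * p (y+1) ≤ 0 := by rw [h2] at ih'; linarith [ih', hp0 y]
          nlinarith
        · have h2' : 0 < p (a+2) := (hp0 _).lt_of_ne' h2
          have hl := hlc (a+1)
          have hl' : p a * p (a+2) ≤ p (a+1)^2 := by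
            have : a + 1 - 1 = a := by ring
            rw [this] at hl; convert hl using 2; ring
          nlinarith [mul_le_mul_of_nonneg_right hl' (hp0 (y+1)),
            mul_le_mul_of_nonneg_left ih' (hp0 (a+1)), hp0 a]

include hp0 hsupp hlc in
lemma up_key (y : ℤ) (hy1 : 0 < p (y-1)) (hy : 0 < p y) :
    ∀ n : ℕ, p (y + n) * p (y-1) ≤ p (y + n - 1) * p y := by
  intro n
  induction n with
  | zero => simp [mul_comm]
  | succ n ih =>
      push_cast
      set a : ℤ := y + n + 1 with ha
      have e : y + ((n:ℤ)+1) = a := by omega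
      rw [e]
      have hay : y - 1 ≤ a - 1 := by omega
      by_cases h1 : p (a-1) = 0
      · have hpa : p a = 0 := by
          by_contra h
          have := hsupp (y-1) a (a-1) hy1 ((hp0 a).lt_of_ne' h) hay (by omega)
          exact h1.symm.not_gt (by linarith) |>.elim
        simp [hpa, mul_nonneg (hp0 _) (hp0 _)]
      · have h1' : 0 < p (a-1) := (hp0 _).lt_of_ne' h1
        have ih' : p (a-1) * p (y-1) ≤ p (a-2) * p y := by
          have e3 : y + (n:ℤ) - 1 = a - 2 := by omega
          have e2 : y + (n:ℤ) = a - 1 := by omega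
          rw [e3, e2] at ih; exact ih
        by_cases h2 : p (a-2) = 0
        · exfalso
          have : p (a-1) * p (y-1) ≤ 0 := by rw [h2] at ih'; linarith [ih', hp0 y]
          nlinarith
        · have h2' : 0 < p (a-2) := (hp0 _).lt_of_ne' h2
          have hl := hlc (a-1)
          have hl' : p (a-2) * p a ≤ p (a-1)^2 := by
            have e4 : a - 1 - 1 = a - 2 := by ring
            have e5 : a - 1 + 1 = a := by ring
            rw [e4, e5] at hl; exact hl
          nlinarith [mul_le_mul_of_nonneg_right hl' (hp0 (y-1)),
            mul_le_mul_of_nonneg_left ih' (hp0 (a-1)), hp0 a]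


variable (hneg : ∀ k : ℤ, k < 0 → p k = 0)

include hp0 hsupp hlc hneg in
lemma Fkey (y : ℤ) :
    (∑ k ∈ Finset.Icc (0:ℤ) y, p k) * (p (y+1) - p y) ≤ p y * p (y+1) := by
  have hF0 : 0 ≤ ∑ k ∈ Finset.Icc (0:ℤ) y, p k :=
    Finset.sum_nonneg fun k _ => hp0 k
  rcases le_or_gt (p (y+1)) (p y) with h | h
  · calc (∑ k ∈ Finset.Icc (0:ℤ) y, p k) * (p (y+1) - p y) ≤ 0 :=
          mul_nonpos_of_nonneg_of_nonpos hF0 (by linarith)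
      _ ≤ p y * p (y+1) := mul_nonneg (hp0 _) (hp0 _)
  · have hy1 : 0 < p (y+1) := lt_of_le_of_lt (hp0 y) h
    rcases eq_or_lt_of_le (hp0 y) with hy | hy
    · have hz : ∑ k ∈ Finset.Icc (0:ℤ) y, p k = 0 := by
        apply Finset.sum_eq_zero
        intro k hk
        simp only [Finset.mem_Icc] at hk
        by_contra hk0
        have := hsupp k (y+1) y ((hp0 k).lt_of_ne' hk0) hy1 hk.2 (by omega)
        exact absurd hy.symm (ne_of_gt this)
      rw [hz, ← hy]; simp
    · have hy0 : 0 ≤ y := by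
        by_contra hc
        exact absurd (hneg y (by omega)) (ne_of_gt hy)
      calc (∑ k ∈ Finset.Icc (0:ℤ) y, p k) * (p (y+1) - p y)
          = ∑ k ∈ Finset.Icc (0:ℤ) y, p k * (p (y+1) - p y) := Finset.sum_mul ..
        _ ≤ ∑ k ∈ Finset.Icc (0:ℤ) y, p y * (p (k+1) - p k) := by
            apply Finset.sum_le_sum
            intro k hk
            simp only [Finset.mem_Icc] at hk
            have key := down_key p hp0 hsupp hlc y hy hy1 (y - k).toNat
            rw [Int.toNat_of_nonneg (by omega), show y - (y - k) = k by ring] at key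
            nlinarith [key]
        _ = p y * ∑ k ∈ Finset.Icc (0:ℤ) y, (p (k+1) - p k) := (Finset.mul_sum ..).symm
        _ = p y * (p (y+1) - p 0) := by rw [tele1 p y hy0]
        _ ≤ p y * p (y+1) := by nlinarith [hp0 0, hp0 y, hp0 (y+1)]

include hp0 hsupp hlc in
lemma Gsummable (y : ℤ) (hsum : Summable p) :
    Summable (fun k : ℤ => if y ≤ k then p k else 0) := by
  apply Summable.of_nonneg_of_le (fun k => by split <;> simp [hp0]) (fun k => ?_) hsum
  split <;> simp [hp0]

include hp0 hsupp hlc hneg in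
lemma Gkey (hsum : Summable p) (y : ℤ) :
    (∑' k : ℤ, if y ≤ k then p k else 0) * (p (y-1) - p y) ≤ p (y-1) * p y := by
  have hG0 : 0 ≤ ∑' k : ℤ, if y ≤ k then p k else 0 :=
    tsum_nonneg fun k => by split <;> simp [hp0]
  rcases le_or_gt (p (y-1)) (p y) with h | h
  · calc _ ≤ (0:ℝ) := mul_nonpos_of_nonneg_of_nonpos hG0 (by linarith)
      _ ≤ p (y-1) * p y := mul_nonneg (hp0 _) (hp0 _)
  · have hy1 : 0 < p (y-1) := lt_of_le_of_lt (hp0 y) h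
    rcases eq_or_lt_of_le (hp0 y) with hy | hy
    · have hz : (∑' k : ℤ, if y ≤ k then p k else 0) = 0 := by
        have : ∀ k : ℤ, (if y ≤ k then p k else 0) = 0 := by
          intro k
          split
          · by_contra hk0
            have := hsupp (y-1) k y hy1 ((hp0 k).lt_of_ne' hk0) (by omega) (by omega)
            exact absurd hy.symm (ne_of_gt this)
          · rfl
        simp [this]
      rw [hz]; simp [mul_nonneg (hp0 _) (hp0 _)]
    · have hd : 0 < p (y-1) - p y := by linarith
      have hb : (∑' k : ℤ, if y ≤ k then p k else 0) ≤ p (y-1) * p y / (p (y-1) - p y) := by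
        apply Summable.tsum_le_of_sum_le (Gsummable p hp0 hsupp hlc y hsum)
        intro s
        set N : ℤ := y + ((s.sup fun k => (k - y).toNat : ℕ) : ℤ) with hN
        have hNy : y ≤ N := le_add_of_nonneg_right (Int.natCast_nonneg _)
        have step1 : ∑ k ∈ s, (if y ≤ k then p k else 0) ≤ ∑ k ∈ Finset.Icc y N, p k := by
          rw [← Finset.sum_filter]
          apply Finset.sum_le_sum_of_subset_of_nonneg
          · intro k hk
            simp only [Finset.mem_filter] at hk
            simp only [Finset.mem_Icc]
            refine ⟨hk.2, ?_⟩
            have hle : (k - y).toNat ≤ s.sup fun k => (k - y).toNat :=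
              Finset.le_sup (f := fun k => (k - y).toNat) hk.1
            omega
          · intro k _ _; exact hp0 k
        have step2 : (∑ k ∈ Finset.Icc y N, p k) * (p (y-1) - p y) ≤ p (y-1) * p y := by
          calc (∑ k ∈ Finset.Icc y N, p k) * (p (y-1) - p y)
              = ∑ k ∈ Finset.Icc y N, p k * (p (y-1) - p y) := Finset.sum_mul ..
            _ ≤ ∑ k ∈ Finset.Icc y N, p y * (p (k-1) - p k) := by
                apply Finset.sum_le_sum
                intro k hk
                simp only [Finset.mem_Icc] at hk
                have key := up_key p hp0 hsupp hlc y hy1 hy (k - y).toNat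
                rw [Int.toNat_of_nonneg (by omega), show y + (k - y) = k by ring] at key
                nlinarith [key]
            _ = p y * ∑ k ∈ Finset.Icc y N, (p (k-1) - p k) := (Finset.mul_sum ..).symm
            _ = p y * (p (y-1) - p N) := by rw [tele2 p y N hNy]
            _ ≤ p (y-1) * p y := by nlinarith [hp0 N, hp0 y, hp0 (y-1)]
        rw [le_div_iff₀ hd]
        calc (∑ k ∈ s, if y ≤ k then p k else 0) * (p (y-1) - p y)
            ≤ (∑ k ∈ Finset.Icc y N, p k) * (p (y-1) - p y) :=
              mul_le_mul_of_nonneg_right step1 (le_of_lt hd)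
          _ ≤ p (y-1) * p y := step2
      calc (∑' k : ℤ, if y ≤ k then p k else 0) * (p (y-1) - p y)
          ≤ (p (y-1) * p y / (p (y-1) - p y)) * (p (y-1) - p y) :=
            mul_le_mul_of_nonneg_right hb (le_of_lt hd)
        _ = p (y-1) * p y := div_mul_cancel₀ _ (ne_of_gt hd)

end aux

/-- A discretely log-concave probability mass function on ℤ (vanishing on
negatives, with contiguous support) has discretely log-concave cumulative mass function
and survival mass function. -/
theorem stmt_4
    (p : ℤ → ℝ) (hp0 : ∀ k, 0 ≤ p k)
    (hsum : Summable p) (htotal : ∑' k : ℤ, p k = 1)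
    (hneg : ∀ k : ℤ, k < 0 → p k = 0)
    (hsupp : ∀ a b c : ℤ, 0 < p a → 0 < p b → a ≤ c → c ≤ b → 0 < p c)
    (hlc : ∀ x : ℤ, p (x - 1) * p (x + 1) ≤ p x ^ 2) :
    (∀ y : ℤ,
        (∑' k : ℤ, if k ≤ y - 1 then p k else 0) * (∑' k : ℤ, if k ≤ y + 1 then p k else 0) ≤
          (∑' k : ℤ, if k ≤ y then p k else 0) ^ 2) ∧
    (∀ y : ℤ,
        (∑' k : ℤ, if y - 1 ≤ k then p k else 0) * (∑' k : ℤ, if y + 1 ≤ k then p k else 0) ≤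
          (∑' k : ℤ, if y ≤ k then p k else 0) ^ 2) := by
  have hF : ∀ y : ℤ, (∑' k : ℤ, if k ≤ y then p k else 0) = ∑ k ∈ Finset.Icc (0:ℤ) y, p k := by
    intro y
    rw [tsum_eq_sum (s := Finset.Icc (0:ℤ) y) ?_]
    · exact Finset.sum_congr rfl fun k hk => by
        simp only [Finset.mem_Icc] at hk; simp [hk.2]
    · intro b hb
      simp only [Finset.mem_Icc] at hb
      push_neg at hb
      rcases lt_or_ge b 0 with hb0 | hb0
      · simp [hneg b hb0]
      · simp [show ¬ b ≤ y by exact not_le.mpr (hb hb0)]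
  have hFrec : ∀ y : ℤ, (∑ k ∈ Finset.Icc (0:ℤ) y, p k)
      = (∑ k ∈ Finset.Icc (0:ℤ) (y-1), p k) + p y := by
    intro y
    rcases le_or_gt 0 y with hy | hy
    · have h1 : Finset.Icc (0:ℤ) y = insert y (Finset.Icc 0 (y-1)) := by
        ext k; simp only [Finset.mem_Icc, Finset.mem_insert]; omega
      rw [h1, Finset.sum_insert (by simp only [Finset.mem_Icc]; omega)]
      ring
    · have e1 : Finset.Icc (0:ℤ) y = ∅ := Finset.Icc_eq_empty (by omega)
      have e2 : Finset.Icc (0:ℤ) (y-1) = ∅ := Finset.Icc_eq_empty (by omega)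
      simp [e1, e2, hneg y hy]
  have hGrec : ∀ y : ℤ, (∑' k : ℤ, if y ≤ k then p k else 0)
      = p y + ∑' k : ℤ, if y + 1 ≤ k then p k else 0 := by
    intro y
    have hs1 := Gsummable p hp0 hsupp hlc (y+1) hsum
    have hsingle : Summable (fun k : ℤ => if k = y then p y else 0) :=
      summable_of_ne_finset_zero (s := {y}) (fun b hb => by
        simp only [Finset.mem_singleton] at hb; simp [hb])
    rw [show (fun k : ℤ => if y ≤ k then p k else 0)
        = fun k => (if k = y then p y else 0) + (if y + 1 ≤ k then p k else 0) from
      funext fun k => by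
        rcases lt_trichotomy k y with h | h | h
        · simp [show ¬ y ≤ k by omega, show k ≠ y by omega, show ¬ y+1 ≤ k by omega]
        · subst h; simp [show ¬ k+1 ≤ k by omega]
        · simp [show y ≤ k by omega, show k ≠ y by omega, show y+1 ≤ k by omega]]
    rw [Summable.tsum_add hsingle hs1, show (∑' b : ℤ, if b = y then p y else 0) = p y from tsum_ite_eq y (fun _ => p y)]
  constructor
  · intro y
    rw [hF, hF, hF]
    have key := Fkey p hp0 hsupp hlc hneg y
    have h2 := hFrec y
    have h1 := hFrec (y+1)
    rw [show y + 1 - 1 = y by ring] at h1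
    nlinarith [key, hp0 y, hp0 (y+1),
      Finset.sum_nonneg (fun k _ => hp0 k : ∀ k ∈ Finset.Icc (0:ℤ) y, 0 ≤ p k)]
  · intro y
    have key := Gkey p hp0 hsupp hlc hneg hsum y
    have h1 := hGrec (y-1)
    rw [show y - 1 + 1 = y by ring] at h1
    have h2 := hGrec y
    have hG0 : 0 ≤ ∑' k : ℤ, if y ≤ k then p k else 0 :=
      tsum_nonneg fun k => by split <;> simp [hp0]
    nlinarith [key, hp0 y, hp0 (y-1), hG0]
end

section
/- For every t ∈ {0,…,T} and every state s ∈ ℕ, the optimal value function is nonincreasing in the state: U*(t,s+1) ≤ U*(t,s). -/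
/-- The optimal value function of the pricing MDP is nonincreasing in the
state: `U*(t,s+1) ≤ U*(t,s)` for every `t ∈ {0,…,T}` and state `s`. -/
theorem stmt_6
    (T L : ℕ) (hL : 1 ≤ L)
    (P : ℕ → ℝ) (hPnn : ∀ ℓ, 0 ≤ P ℓ)
    (hPsum : ∑ ℓ ∈ Finset.Icc 1 L, P ℓ = 1)
    (V : ℝ) (hV : 0 < V)
    (𝒱 : Finset ℝ) (h𝒱ne : 𝒱.Nonempty) (h𝒱 : ∀ μ ∈ 𝒱, 0 ≤ μ ∧ μ ≤ V)
    (q : ℝ → ℕ → ℕ → ℝ)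
    (hq01 : ∀ μ s ℓ, 0 ≤ q μ s ℓ ∧ q μ s ℓ ≤ 1)
    (hqμ : ∀ μ μ' s ℓ, μ ≤ μ' → q μ' s ℓ ≤ q μ s ℓ)
    (hqs : ∀ μ s s' ℓ, s ≤ s' → q μ s' ℓ ≤ q μ s ℓ)
    (U : ℕ → ℕ → ℝ)
    (hUT : ∀ s, U T s = 0)
    (hU : ∀ t, t < T → ∀ s, U t s =
      ∑ ℓ ∈ Finset.Icc 1 L, P ℓ *
        (max 0 (𝒱.sup' h𝒱ne fun μ =>
            q μ s ℓ * (μ + U (t + 1) (s + ℓ - 1) - U (t + 1) (s - 1)))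
          + U (t + 1) (s - 1))) :
    ∀ t, t ≤ T → ∀ s : ℕ, U t (s + 1) ≤ U t s := by
  suffices h : ∀ d t, t + d = T → ∀ s : ℕ, U t (s + 1) ≤ U t s by
    intro t ht s; exact h (T - t) t (by omega) s
  intro d
  induction d with
  | zero =>
    intro t ht s
    have : t = T := by omega
    subst this
    rw [hUT, hUT]
  | succ d ih =>
    intro t ht s
    have htT : t < T := by omega
    have IH : ∀ s : ℕ, U (t + 1) (s + 1) ≤ U (t + 1) s := fun s => ih (t + 1) (by omega) s
    have IH' : ∀ s : ℕ, U (t + 1) s ≤ U (t + 1) (s - 1) := by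
      intro s
      cases s with
      | zero => simp
      | succ n => simpa using IH n
    rw [hU t htT (s + 1), hU t htT s]
    apply Finset.sum_le_sum
    intro ℓ hℓ
    have hℓ1 : 1 ≤ ℓ := (Finset.mem_Icc.mp hℓ).1
    apply mul_le_mul_of_nonneg_left _ (hPnn ℓ)
    have e1 : s + 1 - 1 = s := by omega
    have e2 : s + 1 + ℓ - 1 = s + ℓ := by omega
    rw [e1, e2]
    -- abbreviations
    set W := U (t + 1) with hW
    have hWs : W s ≤ W (s - 1) := IH' s
    have hWsl : W (s + ℓ) ≤ W (s + ℓ - 1) := by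
      have := IH (s + ℓ - 1)
      have e3 : s + ℓ - 1 + 1 = s + ℓ := by omega
      rwa [e3] at this
    have hrhs0 : W (s - 1) ≤
        max 0 (𝒱.sup' h𝒱ne fun μ => q μ s ℓ * (μ + W (s + ℓ - 1) - W (s - 1))) + W (s - 1) := by
      have := le_max_left (0 : ℝ)
        (𝒱.sup' h𝒱ne fun μ => q μ s ℓ * (μ + W (s + ℓ - 1) - W (s - 1)))
      linarith
    rcases le_or_gt (𝒱.sup' h𝒱ne fun μ => q μ (s + 1) ℓ * (μ + W (s + ℓ) - W s)) 0 with hle | hgt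
    · rw [max_eq_left hle]
      calc (0 : ℝ) + W s = W s := by ring
        _ ≤ W (s - 1) := hWs
        _ ≤ _ := hrhs0
    · rw [max_eq_right hgt.le]
      have key : (𝒱.sup' h𝒱ne fun μ => q μ (s + 1) ℓ * (μ + W (s + ℓ) - W s)) ≤
          (max 0 (𝒱.sup' h𝒱ne fun μ => q μ s ℓ * (μ + W (s + ℓ - 1) - W (s - 1)))
            + W (s - 1)) - W s := by
        apply Finset.sup'_le
        intro μ hμ
        rw [le_sub_iff_add_le]
        have hq' : q μ (s + 1) ℓ ≤ q μ s ℓ := hqs μ s (s + 1) ℓ (by omega)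
        have hq0 : 0 ≤ q μ (s + 1) ℓ := (hq01 μ (s + 1) ℓ).1
        have hq0' : 0 ≤ q μ s ℓ := (hq01 μ s ℓ).1
        have hq1 : q μ s ℓ ≤ 1 := (hq01 μ s ℓ).2
        have hsup : q μ s ℓ * (μ + W (s + ℓ - 1) - W (s - 1)) ≤
            𝒱.sup' h𝒱ne fun μ => q μ s ℓ * (μ + W (s + ℓ - 1) - W (s - 1)) :=
          Finset.le_sup' (fun μ => q μ s ℓ * (μ + W (s + ℓ - 1) - W (s - 1))) hμ
        have hmax : (𝒱.sup' h𝒱ne fun μ => q μ s ℓ * (μ + W (s + ℓ - 1) - W (s - 1))) ≤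
            max 0 (𝒱.sup' h𝒱ne fun μ => q μ s ℓ * (μ + W (s + ℓ - 1) - W (s - 1))) :=
          le_max_right _ _
        rcases le_or_gt (μ + W (s + ℓ) - W s) 0 with hX | hX
        · have : q μ (s + 1) ℓ * (μ + W (s + ℓ) - W s) ≤ 0 :=
            mul_nonpos_of_nonneg_of_nonpos hq0 hX
          linarith
        · have h1 : q μ (s + 1) ℓ * (μ + W (s + ℓ) - W s) ≤
              q μ s ℓ * (μ + W (s + ℓ) - W s) :=
            mul_le_mul_of_nonneg_right hq' hX.le
          have h2 : q μ s ℓ * (μ + W (s + ℓ) - W s) + W s ≤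
              q μ s ℓ * (μ + W (s + ℓ - 1) - W (s - 1)) + W (s - 1) := by
            nlinarith [mul_le_mul_of_nonneg_left hWsl hq0',
              mul_le_mul_of_nonneg_left hWs (sub_nonneg.mpr hq1)]
          linarith

      linarith
end

section
/- Assume additionally that q(μ,s,ℓ) > 0 for all μ ∈ 𝒱, s, ℓ, and that Assumption 1 holds. Fix t < T, a state s, and a length ℓ < 𝕃, and set Δ_ℓ := U*(t+1, s+ℓ−1) − U*(t+1, s∸1) and Δ_{ℓ+1} := U*(t+1, s+ℓ) − U*(t+1, s∸1). If μ₀ ∈ 𝒱 maximizes μ ↦ q(μ,s,ℓ)·(μ + Δ_ℓ) over 𝒱, then for every μ ∈ 𝒱 with μ ≤ μ₀: max(0, q(μ,s,ℓ+1)·(μ + Δ_{ℓ+1})) ≤ max(0, q(μ₀,s,ℓ+1)·(μ₀ + Δ_{ℓ+1})). In particular, any price below an optimal price for length ℓ is weakly dominated as a price for length ℓ+1. -/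
/-- Core monotonicity lemma for one Bellman summand: if the continuation values and the
acceptance probability all decrease, the value `max 0 (q*(μ+A-B)) + B` decreases. -/
lemma stmt7_core (μ A B A' B' qv qv' : ℝ) (hA : A' ≤ A) (hB : B' ≤ B)
    (hq0 : 0 ≤ qv') (hq : qv' ≤ qv) (hq1 : qv ≤ 1) :
    max 0 (qv' * (μ + A' - B')) + B' ≤ max 0 (qv * (μ + A - B)) + B := by
  have hM0 : (0:ℝ) ≤ max 0 (qv * (μ + A - B)) := le_max_left _ _
  have hM : qv * (μ + A - B) ≤ max 0 (qv * (μ + A - B)) := le_max_right _ _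
  rcases le_or_gt (qv' * (μ + A' - B')) 0 with h | h
  · rw [max_eq_left h]; linarith
  · rw [max_eq_right h.le]
    have hx : 0 < μ + A' - B' := by
      rcases mul_pos_iff.mp h with ⟨_, hx⟩ | ⟨hneg, _⟩
      · exact hx
      · linarith
    rcases le_or_gt 0 (μ + A - B) with hpos | hneg
    · nlinarith [mul_nonneg hq0 (sub_nonneg.2 hA),
        mul_nonneg (by linarith : (0:ℝ) ≤ 1 - qv') (sub_nonneg.2 hB),
        mul_nonneg (sub_nonneg.2 hq) hpos]
    · nlinarith [mul_nonneg (by linarith : (0:ℝ) ≤ 1 - qv') hx.le]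

/-- Under positivity of the acceptance probabilities and Assumption 1, any
price `μ ≤ μ₀` below an optimal price `μ₀` for length `ℓ` is weakly dominated by `μ₀` as
a price for length `ℓ+1`. -/
theorem stmt_7
    (T L : ℕ) (hL : 1 ≤ L)
    (P : ℕ → ℝ) (hPnn : ∀ ℓ, 0 ≤ P ℓ)
    (hPsum : ∑ ℓ ∈ Finset.Icc 1 L, P ℓ = 1)
    (V : ℝ) (hV : 0 < V)
    (𝒱 : Finset ℝ) (h𝒱ne : 𝒱.Nonempty) (h𝒱 : ∀ μ ∈ 𝒱, 0 ≤ μ ∧ μ ≤ V)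
    (q : ℝ → ℕ → ℕ → ℝ)
    (hq01 : ∀ μ s ℓ, 0 ≤ q μ s ℓ ∧ q μ s ℓ ≤ 1)
    (hqμ : ∀ μ μ' s ℓ, μ ≤ μ' → q μ' s ℓ ≤ q μ s ℓ)
    (hqs : ∀ μ s s' ℓ, s ≤ s' → q μ s' ℓ ≤ q μ s ℓ)
    (hqpos : ∀ μ ∈ 𝒱, ∀ s ℓ : ℕ, 1 ≤ ℓ → ℓ ≤ L → 0 < q μ s ℓ)
    (hA1 : ∀ μ ∈ 𝒱, ∀ μ' ∈ 𝒱, μ ≤ μ' → ∀ s ℓ : ℕ, 1 ≤ ℓ → ℓ < L →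
      q μ' s ℓ * q μ s (ℓ + 1) ≤ q μ' s (ℓ + 1) * q μ s ℓ)
    (U : ℕ → ℕ → ℝ)
    (hUT : ∀ s, U T s = 0)
    (hU : ∀ t, t < T → ∀ s, U t s =
      ∑ ℓ ∈ Finset.Icc 1 L, P ℓ *
        (max 0 (𝒱.sup' h𝒱ne fun μ =>
            q μ s ℓ * (μ + U (t + 1) (s + ℓ - 1) - U (t + 1) (s - 1)))
          + U (t + 1) (s - 1)))
    (t : ℕ) (ht : t < T) (s ℓ : ℕ) (hℓ1 : 1 ≤ ℓ) (hℓL : ℓ < L)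
    (μ₀ : ℝ) (hμ₀ : μ₀ ∈ 𝒱)
    (hopt : ∀ μ ∈ 𝒱,
      q μ s ℓ * (μ + (U (t + 1) (s + ℓ - 1) - U (t + 1) (s - 1))) ≤
        q μ₀ s ℓ * (μ₀ + (U (t + 1) (s + ℓ - 1) - U (t + 1) (s - 1)))) :
    ∀ μ ∈ 𝒱, μ ≤ μ₀ →
      max 0 (q μ s (ℓ + 1) * (μ + (U (t + 1) (s + ℓ) - U (t + 1) (s - 1)))) ≤
        max 0 (q μ₀ s (ℓ + 1) * (μ₀ + (U (t + 1) (s + ℓ) - U (t + 1) (s - 1)))) := by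
  -- U is nonincreasing in the state, at every time `t` with `t + k = T`.
  have Umono : ∀ k t', t' + k = T → ∀ s₁ s₂ : ℕ, s₁ ≤ s₂ → U t' s₂ ≤ U t' s₁ := by
    intro k
    induction k with
    | zero => intro t' hT s₁ s₂ _; simp only [Nat.add_zero] at hT; subst hT
              rw [hUT, hUT]
    | succ n ih =>
      intro t' hT s₁ s₂ hs
      have ht' : t' < T := by omega
      have hT' : (t' + 1) + n = T := by omega
      rw [hU t' ht' s₁, hU t' ht' s₂]
      apply Finset.sum_le_sum
      intro i hi
      apply mul_le_mul_of_nonneg_left _ (hPnn i)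
      -- compare the bracket terms
      set A := U (t' + 1) (s₁ + i - 1)
      set B := U (t' + 1) (s₁ - 1)
      set A' := U (t' + 1) (s₂ + i - 1)
      set B' := U (t' + 1) (s₂ - 1)
      have hAA : A' ≤ A := ih (t' + 1) hT' _ _ (by omega)
      have hBB : B' ≤ B := ih (t' + 1) hT' _ _ (by omega)
      have hsup : ∀ μ ∈ 𝒱,
          max 0 (q μ s₂ i * (μ + A' - B')) + B' ≤
          max 0 (𝒱.sup' h𝒱ne fun μ => q μ s₁ i * (μ + A - B)) + B := by
        intro μ hμ
        calc max 0 (q μ s₂ i * (μ + A' - B')) + B'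
            ≤ max 0 (q μ s₁ i * (μ + A - B)) + B :=
              stmt7_core μ A B A' B' _ _ hAA hBB (hq01 μ s₂ i).1
                (hqs μ s₁ s₂ i hs) (hq01 μ s₁ i).2
          _ ≤ max 0 (𝒱.sup' h𝒱ne fun μ => q μ s₁ i * (μ + A - B)) + B := by
              gcongr
              exact Finset.le_sup' (fun μ => q μ s₁ i * (μ + A - B)) hμ
      -- now bound the sup' on the left
      have h0 : (0:ℝ) + B' ≤
          max 0 (𝒱.sup' h𝒱ne fun μ => q μ s₁ i * (μ + A - B)) + B := by
        have : (0:ℝ) ≤ max 0 (𝒱.sup' h𝒱ne fun μ => q μ s₁ i * (μ + A - B)) :=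
          le_max_left _ _
        linarith
      rcases le_or_gt (𝒱.sup' h𝒱ne fun μ => q μ s₂ i * (μ + A' - B')) 0 with hle | hgt
      · rw [max_eq_left hle]; exact h0
      · rw [max_eq_right hgt.le]
        obtain ⟨μm, hμm, hμmeq⟩ := Finset.exists_mem_eq_sup' h𝒱ne
          (fun μ => q μ s₂ i * (μ + A' - B'))
        rw [hμmeq]
        calc q μm s₂ i * (μm + A' - B') + B'
            ≤ max 0 (q μm s₂ i * (μm + A' - B')) + B' := by
              gcongr; exact le_max_right _ _
          _ ≤ _ := hsup μm hμm
  -- key consequence: Δ_{ℓ+1} ≤ Δ_ℓ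
  have hTk : (t + 1) + (T - (t + 1)) = T := by omega
  have hUdec : U (t + 1) (s + ℓ) ≤ U (t + 1) (s + ℓ - 1) :=
    Umono (T - (t + 1)) (t + 1) hTk _ _ (by omega)
  intro μ hμ hμμ₀
  set Δ := U (t + 1) (s + ℓ - 1) - U (t + 1) (s - 1) with hΔ
  set Δ' := U (t + 1) (s + ℓ) - U (t + 1) (s - 1) with hΔ'
  have hΔΔ : Δ' ≤ Δ := by simp only [hΔ, hΔ']; linarith
  set q1 := q μ s ℓ
  set q0 := q μ₀ s ℓ
  set q1' := q μ s (ℓ + 1)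
  set q0' := q μ₀ s (ℓ + 1)
  have hq1pos : 0 < q1 := hqpos μ hμ s ℓ hℓ1 (by omega)
  have hq0pos : 0 < q0 := hqpos μ₀ hμ₀ s ℓ hℓ1 (by omega)
  have hq1'pos : 0 < q1' := hqpos μ hμ s (ℓ + 1) (by omega) (by omega)
  have hq0'pos : 0 < q0' := hqpos μ₀ hμ₀ s (ℓ + 1) (by omega) (by omega)
  have hq01' : q0' ≤ q1' := hqμ μ μ₀ s (ℓ + 1) hμμ₀
  have hA1' : q0 * q1' ≤ q0' * q1 := hA1 μ hμ μ₀ hμ₀ hμμ₀ s ℓ hℓ1 hℓL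
  have hoptμ : q1 * (μ + Δ) ≤ q0 * (μ₀ + Δ) := hopt μ hμ
  rcases le_or_gt (q1' * (μ + Δ')) 0 with hle | hgt
  · calc max 0 (q1' * (μ + Δ')) = 0 := max_eq_left hle
      _ ≤ _ := le_max_left _ _
  · rw [max_eq_right hgt.le]
    have hxΔ' : 0 < μ + Δ' := by
      rcases mul_pos_iff.mp hgt with ⟨_, hx⟩ | ⟨hneg, _⟩
      · exact hx
      · linarith
    have hxΔ : 0 < μ + Δ := by linarith
    have hμ₀Δ : 0 < μ₀ + Δ := by nlinarith
    -- step 1: q1' * (μ + Δ) ≤ q0' * (μ₀ + Δ)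
    have step1 : q1' * (μ + Δ) ≤ q0' * (μ₀ + Δ) := by
      have h1 : q1 * (q1' * (μ + Δ)) ≤ q1' * (q0 * (μ₀ + Δ)) := by nlinarith
      have h2 : q1' * (q0 * (μ₀ + Δ)) ≤ q1 * (q0' * (μ₀ + Δ)) := by nlinarith
      have := le_trans h1 h2
      exact le_of_mul_le_mul_left (by linarith) hq1pos
    -- step 2: shift Δ to Δ'
    have step2 : q1' * (μ + Δ') ≤ q0' * (μ₀ + Δ') := by nlinarith
    exact le_trans step2 (le_max_right _ _)
end

section
/- Suppose |G(ℓ,μ,s) − Ĝ(ℓ,μ,s)| ≤ ε and |P(ℓ) − P̂(ℓ)| ≤ ε for all lengths ℓ, prices μ ∈ 𝒱 and states s. Then the corresponding optimal value functions satisfy |U*(t,s) − Û*(t,s)| ≤ 2·(T−t)·𝕍·𝕃·ε for every t ∈ {0,…,T} and state s ∈ ℕ. -/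
lemma mono_aux (T L : ℕ) (𝒱 : Finset ℝ) (h𝒱ne : 𝒱.Nonempty)
    (P : ℕ → ℝ) (G : ℕ → ℝ → ℕ → ℝ)
    (hPnn : ∀ ℓ, 0 ≤ P ℓ)
    (hG : ∀ ℓ ∈ Finset.Icc 1 L, ∀ μ ∈ 𝒱, ∀ s : ℕ, 0 ≤ G ℓ μ s ∧ G ℓ μ s ≤ P ℓ)
    (hGs : ∀ ℓ ∈ Finset.Icc 1 L, ∀ μ : ℝ, ∀ s s' : ℕ, s ≤ s' → G ℓ μ s' ≤ G ℓ μ s)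
    (U : ℕ → ℕ → ℝ) (hUT : ∀ s, U T s = 0)
    (hU : ∀ t, t < T → ∀ s, U t s =
      ∑ ℓ ∈ Finset.Icc 1 L,
        (max 0 (𝒱.sup' h𝒱ne fun μ =>
            G ℓ μ s * (μ + U (t + 1) (s + ℓ - 1) - U (t + 1) (s - 1)))
          + P ℓ * U (t + 1) (s - 1))) :
    ∀ d t, t + d = T → ∀ s s' : ℕ, s ≤ s' → U t s' ≤ U t s := by
  intro d
  induction d with
  | zero =>
    intro t ht s s' _
    have : t = T := by omega
    subst this
    rw [hUT, hUT]
  | succ d ih =>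
    intro t ht s s' hss
    have htT : t < T := by omega
    have ih' : ∀ k k' : ℕ, k ≤ k' → U (t+1) k' ≤ U (t+1) k :=
      fun k k' h => ih (t+1) (by omega) k k' h
    rw [hU t htT s, hU t htT s']
    apply Finset.sum_le_sum
    intro ℓ hℓ
    have hℓ1 : 1 ≤ ℓ := (Finset.mem_Icc.mp hℓ).1
    have hg : U (t+1) (s'-1) ≤ U (t+1) (s-1) := ih' _ _ (by omega)
    have hPl : 0 ≤ P ℓ := hPnn ℓ
    have key : max 0 (𝒱.sup' h𝒱ne fun μ =>
          G ℓ μ s' * (μ + U (t + 1) (s' + ℓ - 1) - U (t + 1) (s' - 1)))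
        ≤ max 0 (𝒱.sup' h𝒱ne fun μ =>
          G ℓ μ s * (μ + U (t + 1) (s + ℓ - 1) - U (t + 1) (s - 1)))
          + P ℓ * (U (t+1) (s-1) - U (t+1) (s'-1)) := by
      apply max_le
      · have h1 : (0:ℝ) ≤ max 0 (𝒱.sup' h𝒱ne fun μ =>
            G ℓ μ s * (μ + U (t + 1) (s + ℓ - 1) - U (t + 1) (s - 1))) := le_max_left _ _
        nlinarith [mul_nonneg hPl (sub_nonneg.mpr hg)]
      · apply Finset.sup'_le
        intro μ hμ
        have hGnn := (hG ℓ hℓ μ hμ s).1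
        have hGnn' := (hG ℓ hℓ μ hμ s').1
        have hGleP := (hG ℓ hℓ μ hμ s).2
        have hv : U (t+1) (s'+ℓ-1) ≤ U (t+1) (s+ℓ-1) := ih' _ _ (by omega)
        rcases le_or_gt (μ + U (t + 1) (s' + ℓ - 1) - U (t + 1) (s' - 1)) 0 with h0 | h0
        · have : G ℓ μ s' * (μ + U (t + 1) (s' + ℓ - 1) - U (t + 1) (s' - 1)) ≤ 0 :=
            mul_nonpos_of_nonneg_of_nonpos hGnn' h0
          have h1 : (0:ℝ) ≤ max 0 (𝒱.sup' h𝒱ne fun μ =>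
              G ℓ μ s * (μ + U (t + 1) (s + ℓ - 1) - U (t + 1) (s - 1))) := le_max_left _ _
          nlinarith [mul_nonneg hPl (sub_nonneg.mpr hg)]
        · have hGss : G ℓ μ s' ≤ G ℓ μ s := hGs ℓ hℓ μ s s' hss
          calc G ℓ μ s' * (μ + U (t + 1) (s' + ℓ - 1) - U (t + 1) (s' - 1))
              ≤ G ℓ μ s * (μ + U (t + 1) (s' + ℓ - 1) - U (t + 1) (s' - 1)) :=
                mul_le_mul_of_nonneg_right hGss h0.le
            _ ≤ G ℓ μ s * ((μ + U (t + 1) (s + ℓ - 1) - U (t + 1) (s - 1))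
                  + (U (t+1) (s-1) - U (t+1) (s'-1))) := by
                apply mul_le_mul_of_nonneg_left _ hGnn
                linarith
            _ = G ℓ μ s * (μ + U (t + 1) (s + ℓ - 1) - U (t + 1) (s - 1))
                  + G ℓ μ s * (U (t+1) (s-1) - U (t+1) (s'-1)) := by ring
            _ ≤ _ := by
                apply add_le_add
                · exact le_trans (Finset.le_sup' (fun μ => G ℓ μ s * (μ + U (t + 1) (s + ℓ - 1) - U (t + 1) (s - 1))) hμ) (le_max_right _ _)
                · exact mul_le_mul_of_nonneg_right hGleP (sub_nonneg.mpr hg)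
    nlinarith [key]

lemma key_aux (T L : ℕ) (hL : 1 ≤ L) (V : ℝ) (hV : 0 < V)
    (𝒱 : Finset ℝ) (h𝒱ne : 𝒱.Nonempty) (h𝒱 : ∀ μ ∈ 𝒱, 0 ≤ μ ∧ μ ≤ V)
    (ε : ℝ) (hε : 0 ≤ ε)
    (P : ℕ → ℝ) (G : ℕ → ℝ → ℕ → ℝ)
    (hPnn : ∀ ℓ, 0 ≤ P ℓ) (hPsum : ∑ ℓ ∈ Finset.Icc 1 L, P ℓ = 1)
    (hG : ∀ ℓ ∈ Finset.Icc 1 L, ∀ μ ∈ 𝒱, ∀ s : ℕ, 0 ≤ G ℓ μ s ∧ G ℓ μ s ≤ P ℓ)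
    (hGs : ∀ ℓ ∈ Finset.Icc 1 L, ∀ μ : ℝ, ∀ s s' : ℕ, s ≤ s' → G ℓ μ s' ≤ G ℓ μ s)
    (P' : ℕ → ℝ) (G' : ℕ → ℝ → ℕ → ℝ)
    (hP'nn : ∀ ℓ, 0 ≤ P' ℓ) (hP'sum : ∑ ℓ ∈ Finset.Icc 1 L, P' ℓ = 1)
    (hG' : ∀ ℓ ∈ Finset.Icc 1 L, ∀ μ ∈ 𝒱, ∀ s : ℕ, 0 ≤ G' ℓ μ s ∧ G' ℓ μ s ≤ P' ℓ)
    (hGclose : ∀ ℓ ∈ Finset.Icc 1 L, ∀ μ ∈ 𝒱, ∀ s : ℕ, |G ℓ μ s - G' ℓ μ s| ≤ ε)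
    (U U' : ℕ → ℕ → ℝ)
    (hUT : ∀ s, U T s = 0)
    (hU : ∀ t, t < T → ∀ s, U t s =
      ∑ ℓ ∈ Finset.Icc 1 L,
        (max 0 (𝒱.sup' h𝒱ne fun μ =>
            G ℓ μ s * (μ + U (t + 1) (s + ℓ - 1) - U (t + 1) (s - 1)))
          + P ℓ * U (t + 1) (s - 1)))
    (hU'T : ∀ s, U' T s = 0)
    (hU' : ∀ t, t < T → ∀ s, U' t s =
      ∑ ℓ ∈ Finset.Icc 1 L,
        (max 0 (𝒱.sup' h𝒱ne fun μ =>
            G' ℓ μ s * (μ + U' (t + 1) (s + ℓ - 1) - U' (t + 1) (s - 1)))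
          + P' ℓ * U' (t + 1) (s - 1))) :
    ∀ d t, t + d = T → ∀ s : ℕ, U t s - U' t s ≤ 2 * (d : ℝ) * V * L * ε := by
  have hmono := mono_aux T L 𝒱 h𝒱ne P G hPnn hG hGs U hUT hU
  intro d
  induction d with
  | zero =>
    intro t ht s
    have : t = T := by omega
    subst this
    rw [hUT, hU'T]
    simp
  | succ d ih =>
    intro t ht s
    have htT : t < T := by omega
    set Δ : ℝ := 2 * (d : ℝ) * V * L * ε with hΔdef
    have hΔ : 0 ≤ Δ := by positivity
    have ihD : ∀ k, U (t+1) k - U' (t+1) k ≤ Δ := fun k => ih (t+1) (by omega) k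
    have hm : ∀ k k' : ℕ, k ≤ k' → U (t+1) k' ≤ U (t+1) k :=
      fun k k' h => hmono d (t+1) (by omega) k k' h
    rw [hU t htT s, hU' t htT s, ← Finset.sum_sub_distrib]
    have main : ∀ ℓ ∈ Finset.Icc 1 L,
        (max 0 (𝒱.sup' h𝒱ne fun μ =>
            G ℓ μ s * (μ + U (t + 1) (s + ℓ - 1) - U (t + 1) (s - 1)))
          + P ℓ * U (t + 1) (s - 1))
        - (max 0 (𝒱.sup' h𝒱ne fun μ =>
            G' ℓ μ s * (μ + U' (t + 1) (s + ℓ - 1) - U' (t + 1) (s - 1)))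
          + P' ℓ * U' (t + 1) (s - 1))
        ≤ ε * V + P' ℓ * Δ + (P ℓ - P' ℓ) * U (t + 1) (s - 1) := by
      intro ℓ hℓ
      have hℓ1 : 1 ≤ ℓ := (Finset.mem_Icc.mp hℓ).1
      set u := U (t+1) (s-1) with hu
      set u' := U' (t+1) (s-1) with hu'
      set v := U (t+1) (s+ℓ-1) with hv
      set v' := U' (t+1) (s+ℓ-1) with hv'
      have hDu : u - u' ≤ Δ := ihD (s-1)
      have hDv : v - v' ≤ Δ := ihD (s+ℓ-1)
      have hA'0 : (0:ℝ) ≤ max 0 (𝒱.sup' h𝒱ne fun μ => G' ℓ μ s * (μ + v' - u')) :=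
        le_max_left _ _
      have hεV : 0 ≤ ε * V := mul_nonneg hε hV.le
      have hP'l : 0 ≤ P' ℓ := hP'nn ℓ
      -- suffices one-sided bound on the max-terms
      have goal2 : max 0 (𝒱.sup' h𝒱ne fun μ => G ℓ μ s * (μ + v - u))
          ≤ max 0 (𝒱.sup' h𝒱ne fun μ => G' ℓ μ s * (μ + v' - u'))
            + ε * V + P' ℓ * (Δ - (u - u')) := by
        rcases le_or_gt (𝒱.sup' h𝒱ne fun μ => G ℓ μ s * (μ + v - u)) 0 with hs0 | hs0
        · rw [max_eq_left hs0]
          nlinarith [mul_nonneg hP'l (sub_nonneg.mpr hDu)]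
        · rw [max_eq_right hs0.le]
          obtain ⟨μ0, hμ0, hsupeq⟩ :=
            Finset.exists_mem_eq_sup' h𝒱ne (fun μ => G ℓ μ s * (μ + v - u))
          rw [hsupeq]
          rw [hsupeq] at hs0
          have hGnn := (hG ℓ hℓ μ0 hμ0 s).1
          have hG'nn := (hG' ℓ hℓ μ0 hμ0 s).1
          have hG'P' := (hG' ℓ hℓ μ0 hμ0 s).2
          have hc0 : 0 < μ0 + v - u := by nlinarith
          have hμ0V : μ0 ≤ V := (h𝒱 μ0 hμ0).2
          have hvu : v ≤ u := hm _ _ (by omega)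
          have hcV : μ0 + v - u ≤ V := by linarith
          have hGG' : G ℓ μ0 s - G' ℓ μ0 s ≤ ε := (abs_le.mp (hGclose ℓ hℓ μ0 hμ0 s)).2
          have hA' : G' ℓ μ0 s * (μ0 + v' - u')
              ≤ max 0 (𝒱.sup' h𝒱ne fun μ => G' ℓ μ s * (μ + v' - u')) :=
            le_trans (Finset.le_sup' (fun μ => G' ℓ μ s * (μ + v' - u')) hμ0)
              (le_max_right _ _)
          have expand : G ℓ μ0 s * (μ0 + v - u)
              = (G ℓ μ0 s - G' ℓ μ0 s) * (μ0 + v - u)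
                + G' ℓ μ0 s * ((μ0 + v - u) - (μ0 + v' - u'))
                + G' ℓ μ0 s * (μ0 + v' - u') := by ring
          have h1 : (G ℓ μ0 s - G' ℓ μ0 s) * (μ0 + v - u) ≤ ε * (μ0 + v - u) :=
            mul_le_mul_of_nonneg_right hGG' hc0.le
          have h2 : ε * (μ0 + v - u) ≤ ε * V := mul_le_mul_of_nonneg_left hcV hε
          have h3 : G' ℓ μ0 s * ((μ0 + v - u) - (μ0 + v' - u'))
              ≤ G' ℓ μ0 s * (Δ - (u - u')) :=
            mul_le_mul_of_nonneg_left (by linarith) hG'nn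
          have h4 : G' ℓ μ0 s * (Δ - (u - u')) ≤ P' ℓ * (Δ - (u - u')) :=
            mul_le_mul_of_nonneg_right hG'P' (by linarith)
          linarith
      nlinarith [goal2]
    calc (∑ ℓ ∈ Finset.Icc 1 L,
          ((max 0 (𝒱.sup' h𝒱ne fun μ =>
              G ℓ μ s * (μ + U (t + 1) (s + ℓ - 1) - U (t + 1) (s - 1)))
            + P ℓ * U (t + 1) (s - 1))
          - (max 0 (𝒱.sup' h𝒱ne fun μ =>
              G' ℓ μ s * (μ + U' (t + 1) (s + ℓ - 1) - U' (t + 1) (s - 1)))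
            + P' ℓ * U' (t + 1) (s - 1))))
        ≤ ∑ ℓ ∈ Finset.Icc 1 L,
            (ε * V + P' ℓ * Δ + (P ℓ - P' ℓ) * U (t + 1) (s - 1)) :=
          Finset.sum_le_sum main
      _ = (L : ℝ) * (ε * V) + (∑ ℓ ∈ Finset.Icc 1 L, P' ℓ) * Δ
            + ((∑ ℓ ∈ Finset.Icc 1 L, P ℓ) - ∑ ℓ ∈ Finset.Icc 1 L, P' ℓ)
              * U (t + 1) (s - 1) := by
          rw [Finset.sum_add_distrib, Finset.sum_add_distrib, Finset.sum_const,
            Nat.card_Icc, ← Finset.sum_mul, ← Finset.sum_mul, Finset.sum_sub_distrib]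
          simp [nsmul_eq_mul]
      _ ≤ 2 * ((d:ℝ) + 1) * V * L * ε := by
          rw [hPsum, hP'sum]
          have h0 : (1:ℝ) ≤ (L:ℝ) := by exact_mod_cast hL
          have : 0 ≤ V * (L:ℝ) * ε := by positivity
          nlinarith
      _ = 2 * ((d+1 : ℕ) : ℝ) * V * L * ε := by push_cast; ring



/-- Finite-horizon robustness: if two models `(P,G)` and `(P̂,Ĝ)` are
ε-close, their optimal value functions satisfy `|U*(t,s) − Û*(t,s)| ≤ 2(T−t)𝕍𝕃ε`. -/
theorem stmt_11
    (T L : ℕ) (hL : 1 ≤ L) (V : ℝ) (hV : 0 < V)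
    (𝒱 : Finset ℝ) (h𝒱ne : 𝒱.Nonempty) (h𝒱 : ∀ μ ∈ 𝒱, 0 ≤ μ ∧ μ ≤ V)
    (ε : ℝ) (hε : 0 ≤ ε)
    -- the true model (P, G)
    (P : ℕ → ℝ) (G : ℕ → ℝ → ℕ → ℝ)
    (hPnn : ∀ ℓ, 0 ≤ P ℓ) (hPsum : ∑ ℓ ∈ Finset.Icc 1 L, P ℓ = 1)
    (hG : ∀ ℓ ∈ Finset.Icc 1 L, ∀ μ ∈ 𝒱, ∀ s : ℕ, 0 ≤ G ℓ μ s ∧ G ℓ μ s ≤ P ℓ)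
    (hGμ : ∀ ℓ ∈ Finset.Icc 1 L, ∀ μ μ' : ℝ, ∀ s : ℕ, μ ≤ μ' → G ℓ μ' s ≤ G ℓ μ s)
    (hGs : ∀ ℓ ∈ Finset.Icc 1 L, ∀ μ : ℝ, ∀ s s' : ℕ, s ≤ s' → G ℓ μ s' ≤ G ℓ μ s)
    -- the estimated model (P̂, Ĝ)
    (P' : ℕ → ℝ) (G' : ℕ → ℝ → ℕ → ℝ)
    (hP'nn : ∀ ℓ, 0 ≤ P' ℓ) (hP'sum : ∑ ℓ ∈ Finset.Icc 1 L, P' ℓ = 1)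
    (hG' : ∀ ℓ ∈ Finset.Icc 1 L, ∀ μ ∈ 𝒱, ∀ s : ℕ, 0 ≤ G' ℓ μ s ∧ G' ℓ μ s ≤ P' ℓ)
    (hG'μ : ∀ ℓ ∈ Finset.Icc 1 L, ∀ μ μ' : ℝ, ∀ s : ℕ, μ ≤ μ' → G' ℓ μ' s ≤ G' ℓ μ s)
    (hG's : ∀ ℓ ∈ Finset.Icc 1 L, ∀ μ : ℝ, ∀ s s' : ℕ, s ≤ s' → G' ℓ μ s' ≤ G' ℓ μ s)
    -- ε-closeness
    (hGclose : ∀ ℓ ∈ Finset.Icc 1 L, ∀ μ ∈ 𝒱, ∀ s : ℕ, |G ℓ μ s - G' ℓ μ s| ≤ ε)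
    (hPclose : ∀ ℓ ∈ Finset.Icc 1 L, |P ℓ - P' ℓ| ≤ ε)
    -- the two optimal value functions
    (U U' : ℕ → ℕ → ℝ)
    (hUT : ∀ s, U T s = 0)
    (hU : ∀ t, t < T → ∀ s, U t s =
      ∑ ℓ ∈ Finset.Icc 1 L,
        (max 0 (𝒱.sup' h𝒱ne fun μ =>
            G ℓ μ s * (μ + U (t + 1) (s + ℓ - 1) - U (t + 1) (s - 1)))
          + P ℓ * U (t + 1) (s - 1)))
    (hU'T : ∀ s, U' T s = 0)
    (hU' : ∀ t, t < T → ∀ s, U' t s =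
      ∑ ℓ ∈ Finset.Icc 1 L,
        (max 0 (𝒱.sup' h𝒱ne fun μ =>
            G' ℓ μ s * (μ + U' (t + 1) (s + ℓ - 1) - U' (t + 1) (s - 1)))
          + P' ℓ * U' (t + 1) (s - 1))) :
    ∀ t, t ≤ T → ∀ s : ℕ, |U t s - U' t s| ≤ 2 * ((T - t : ℕ) : ℝ) * V * L * ε := by
  intro t ht s
  have hGclose' : ∀ ℓ ∈ Finset.Icc 1 L, ∀ μ ∈ 𝒱, ∀ s : ℕ, |G' ℓ μ s - G ℓ μ s| ≤ ε := by
    intro ℓ hℓ μ hμ s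
    rw [abs_sub_comm]
    exact hGclose ℓ hℓ μ hμ s
  have h1 := key_aux T L hL V hV 𝒱 h𝒱ne h𝒱 ε hε P G hPnn hPsum hG hGs P' G' hP'nn hP'sum
    hG' hGclose U U' hUT hU hU'T hU' (T - t) t (by omega) s
  have h2 := key_aux T L hL V hV 𝒱 h𝒱ne h𝒱 ε hε P' G' hP'nn hP'sum hG' hG's P G hPnn hPsum
    hG hGclose' U' U hU'T hU' hUT hU (T - t) t (by omega) s
  rw [abs_sub_le_iff]
  exact ⟨h1, h2⟩
end

section
/- Fix a discount factor γ ∈ (0,1), and suppose |G(ℓ,μ,s) − Ĝ(ℓ,μ,s)| ≤ ε and |P(ℓ) − P̂(ℓ)| ≤ ε for all lengths ℓ, prices μ ∈ 𝒱 and states s. Let U*_γ and Û*_γ be functions ℕ → ℝ with values in [0, 𝕍/(1−γ)] satisfying the discounted Bellman fixed-point equations of the two models. Then |U*_γ(s) − Û*_γ(s)| ≤ 2·𝕍·𝕃·ε/(1−γ) for every state s ∈ ℕ. -/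
/-- Monotonicity of the discounted fixed point: `U` is nonincreasing in `s`. -/
lemma stmt12_aux_mono
    (L : ℕ) (V : ℝ)
    (𝒱 : Finset ℝ) (h𝒱ne : 𝒱.Nonempty) (h𝒱 : ∀ μ ∈ 𝒱, 0 ≤ μ ∧ μ ≤ V)
    (γ : ℝ) (hγ0 : 0 < γ) (hγ1 : γ < 1)
    (P : ℕ → ℝ) (G : ℕ → ℝ → ℕ → ℝ)
    (hPnn : ∀ ℓ, 0 ≤ P ℓ) (hPsum : ∑ ℓ ∈ Finset.Icc 1 L, P ℓ = 1)
    (hG : ∀ ℓ ∈ Finset.Icc 1 L, ∀ μ ∈ 𝒱, ∀ s : ℕ, 0 ≤ G ℓ μ s ∧ G ℓ μ s ≤ P ℓ)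
    (hGs : ∀ ℓ ∈ Finset.Icc 1 L, ∀ μ : ℝ, ∀ s s' : ℕ, s ≤ s' → G ℓ μ s' ≤ G ℓ μ s)
    (U : ℕ → ℝ)
    (hUb : ∀ s, 0 ≤ U s ∧ U s ≤ V / (1 - γ))
    (hUfix : ∀ s, U s =
      ∑ ℓ ∈ Finset.Icc 1 L,
        (max 0 (𝒱.sup' h𝒱ne fun μ =>
            G ℓ μ s * (μ + γ * U (s + ℓ - 1) - γ * U (s - 1)))
          + P ℓ * (γ * U (s - 1)))) :
    ∀ a b : ℕ, b ≤ a → U a ≤ U b := by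
  have h1γ : 0 < 1 - γ := by linarith
  have key : ∀ n : ℕ, ∀ a b : ℕ, b ≤ a → U a - U b ≤ γ ^ n * (V / (1 - γ)) := by
    intro n
    induction n with
    | zero =>
      intro a b _
      have h1 := (hUb a).2
      have h2 := (hUb b).1
      simpa using by linarith
    | succ n ih =>
      intro a b hba
      set K : ℝ := γ ^ n * (V / (1 - γ)) with hKdef
      have hK0 : 0 ≤ K := by
        have : (0:ℝ) ≤ V / (1 - γ) := le_trans (hUb 0).1 (hUb 0).2
        positivity
      have perl : ∀ ℓ ∈ Finset.Icc 1 L,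
          (max 0 (𝒱.sup' h𝒱ne fun μ =>
              G ℓ μ a * (μ + γ * U (a + ℓ - 1) - γ * U (a - 1)))
            + P ℓ * (γ * U (a - 1)))
          - (max 0 (𝒱.sup' h𝒱ne fun μ =>
              G ℓ μ b * (μ + γ * U (b + ℓ - 1) - γ * U (b - 1)))
            + P ℓ * (γ * U (b - 1))) ≤ γ * (P ℓ * K) := by
        intro ℓ hℓ
        have hℓ1 : 1 ≤ ℓ := (Finset.mem_Icc.mp hℓ).1
        obtain ⟨μ, hμ, hsup⟩ := Finset.exists_mem_eq_sup' h𝒱ne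
            (fun μ => G ℓ μ a * (μ + γ * U (a + ℓ - 1) - γ * U (a - 1)))
        have hδ0 : U (a - 1) - U (b - 1) ≤ K := ih _ _ (by omega)
        have hδ1 : U (a + ℓ - 1) - U (b + ℓ - 1) ≤ K := ih _ _ (by omega)
        have hP := hPnn ℓ
        have hGb := hG ℓ hℓ μ hμ b
        have hGa := hG ℓ hℓ μ hμ a
        have hMb : G ℓ μ b * (μ + γ * U (b + ℓ - 1) - γ * U (b - 1))
            ≤ max 0 (𝒱.sup' h𝒱ne fun μ =>
              G ℓ μ b * (μ + γ * U (b + ℓ - 1) - γ * U (b - 1))) :=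
          le_trans (Finset.le_sup'
            (fun μ => G ℓ μ b * (μ + γ * U (b + ℓ - 1) - γ * U (b - 1))) hμ)
            (le_max_right _ _)
        have hmb0 : (0:ℝ) ≤ max 0 (𝒱.sup' h𝒱ne fun μ =>
              G ℓ μ b * (μ + γ * U (b + ℓ - 1) - γ * U (b - 1))) := le_max_left _ _
        have hPδ : P ℓ * (γ * U (a - 1)) - P ℓ * (γ * U (b - 1)) ≤ γ * (P ℓ * K) := by
          have := mul_le_mul_of_nonneg_left hδ0 (mul_nonneg hγ0.le hP)
          nlinarith
        rcases le_or_gt (G ℓ μ a * (μ + γ * U (a + ℓ - 1) - γ * U (a - 1))) 0 with h0 | h0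
        · have hma : max 0 (𝒱.sup' h𝒱ne fun μ =>
              G ℓ μ a * (μ + γ * U (a + ℓ - 1) - γ * U (a - 1))) = 0 := by
            rw [hsup]; exact max_eq_left h0
          rw [hma]
          linarith
        · have hxa : 0 < μ + γ * U (a + ℓ - 1) - γ * U (a - 1) := by
            rcases lt_or_ge 0 (μ + γ * U (a + ℓ - 1) - γ * U (a - 1)) with h | h
            · exact h
            · nlinarith [hGa.1]
          have hma : max 0 (𝒱.sup' h𝒱ne fun μ =>
              G ℓ μ a * (μ + γ * U (a + ℓ - 1) - γ * U (a - 1)))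
              = G ℓ μ a * (μ + γ * U (a + ℓ - 1) - γ * U (a - 1)) := by
            rw [hsup]; exact max_eq_right h0.le
          rw [hma]
          have hGab : G ℓ μ a ≤ G ℓ μ b := hGs ℓ hℓ μ b a hba
          have h1 : G ℓ μ a * (μ + γ * U (a + ℓ - 1) - γ * U (a - 1))
              ≤ G ℓ μ b * (μ + γ * U (a + ℓ - 1) - γ * U (a - 1)) :=
            mul_le_mul_of_nonneg_right hGab hxa.le
          have h2 : G ℓ μ b * (γ * (U (a + ℓ - 1) - U (b + ℓ - 1)))
              ≤ G ℓ μ b * (γ * K) :=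
            mul_le_mul_of_nonneg_left (by nlinarith) hGb.1
          have h3 : (P ℓ - G ℓ μ b) * (γ * (U (a - 1) - U (b - 1)))
              ≤ (P ℓ - G ℓ μ b) * (γ * K) :=
            mul_le_mul_of_nonneg_left (by nlinarith) (by linarith [hGb.2])
          nlinarith [hMb]
      have hsum := Finset.sum_le_sum perl
      rw [Finset.sum_sub_distrib] at hsum
      have hsum2 : ∑ ℓ ∈ Finset.Icc 1 L, γ * (P ℓ * K) = γ * K := by
        have : ∑ ℓ ∈ Finset.Icc 1 L, γ * (P ℓ * K)
            = (∑ ℓ ∈ Finset.Icc 1 L, P ℓ) * (γ * K) := by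
          rw [Finset.sum_mul]
          exact Finset.sum_congr rfl fun ℓ _ => by ring
        rw [this, hPsum, one_mul]
      rw [hUfix a, hUfix b]
      have : γ * K = γ ^ (n + 1) * (V / (1 - γ)) := by rw [hKdef]; ring
      linarith
  intro a b hba
  have hten : Filter.Tendsto (fun n : ℕ => γ ^ n * (V / (1 - γ))) Filter.atTop (nhds 0) := by
    have := tendsto_pow_atTop_nhds_zero_of_lt_one hγ0.le hγ1
    simpa using this.mul_const (V / (1 - γ))
  have : U a - U b ≤ 0 :=
    ge_of_tendsto hten (Filter.Eventually.of_forall fun n => key n a b hba)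
  linarith


/-- One-sided one-step contraction estimate between the two models. -/
lemma stmt12_aux_onesided
    (L : ℕ) (V : ℝ) (hV : 0 < V)
    (𝒱 : Finset ℝ) (h𝒱ne : 𝒱.Nonempty) (h𝒱 : ∀ μ ∈ 𝒱, 0 ≤ μ ∧ μ ≤ V)
    (γ : ℝ) (hγ0 : 0 < γ) (hγ1 : γ < 1)
    (ε : ℝ) (hε : 0 ≤ ε)
    (P : ℕ → ℝ) (G : ℕ → ℝ → ℕ → ℝ)
    (hPsum : ∑ ℓ ∈ Finset.Icc 1 L, P ℓ = 1)
    (hG : ∀ ℓ ∈ Finset.Icc 1 L, ∀ μ ∈ 𝒱, ∀ s : ℕ, 0 ≤ G ℓ μ s ∧ G ℓ μ s ≤ P ℓ)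
    (P' : ℕ → ℝ) (G' : ℕ → ℝ → ℕ → ℝ)
    (hP'nn : ∀ ℓ, 0 ≤ P' ℓ) (hP'sum : ∑ ℓ ∈ Finset.Icc 1 L, P' ℓ = 1)
    (hG' : ∀ ℓ ∈ Finset.Icc 1 L, ∀ μ ∈ 𝒱, ∀ s : ℕ, 0 ≤ G' ℓ μ s ∧ G' ℓ μ s ≤ P' ℓ)
    (hGclose : ∀ ℓ ∈ Finset.Icc 1 L, ∀ μ ∈ 𝒱, ∀ s : ℕ, G ℓ μ s - G' ℓ μ s ≤ ε)
    (U U' : ℕ → ℝ)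
    (hUmono : ∀ a b : ℕ, b ≤ a → U a ≤ U b)
    (hUfix : ∀ s, U s =
      ∑ ℓ ∈ Finset.Icc 1 L,
        (max 0 (𝒱.sup' h𝒱ne fun μ =>
            G ℓ μ s * (μ + γ * U (s + ℓ - 1) - γ * U (s - 1)))
          + P ℓ * (γ * U (s - 1))))
    (hU'fix : ∀ s, U' s =
      ∑ ℓ ∈ Finset.Icc 1 L,
        (max 0 (𝒱.sup' h𝒱ne fun μ =>
            G' ℓ μ s * (μ + γ * U' (s + ℓ - 1) - γ * U' (s - 1)))
          + P' ℓ * (γ * U' (s - 1))))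
    (K : ℝ) (hIH : ∀ t, U t - U' t ≤ K) :
    ∀ s : ℕ, U s - U' s ≤ L * ε * V + γ * K := by
  intro s
  have perl : ∀ ℓ ∈ Finset.Icc 1 L,
      (max 0 (𝒱.sup' h𝒱ne fun μ =>
          G ℓ μ s * (μ + γ * U (s + ℓ - 1) - γ * U (s - 1)))
        + P ℓ * (γ * U (s - 1)))
      - (max 0 (𝒱.sup' h𝒱ne fun μ =>
          G' ℓ μ s * (μ + γ * U' (s + ℓ - 1) - γ * U' (s - 1)))
        + P' ℓ * (γ * U' (s - 1)))
      ≤ ε * V + γ * (P' ℓ * K) + γ * ((P ℓ - P' ℓ) * U (s - 1)) := by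
    intro ℓ hℓ
    have hℓ1 : 1 ≤ ℓ := (Finset.mem_Icc.mp hℓ).1
    obtain ⟨μ, hμ, hsup⟩ := Finset.exists_mem_eq_sup' h𝒱ne
        (fun μ => G ℓ μ s * (μ + γ * U (s + ℓ - 1) - γ * U (s - 1)))
    have hδ0 : U (s - 1) - U' (s - 1) ≤ K := hIH _
    have hδ1 : U (s + ℓ - 1) - U' (s + ℓ - 1) ≤ K := hIH _
    have hP' := hP'nn ℓ
    have hGa := hG ℓ hℓ μ hμ s
    have hG'a := hG' ℓ hℓ μ hμ s
    have hclose := hGclose ℓ hℓ μ hμ s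
    have hμV := h𝒱 μ hμ
    have hmb0 : (0:ℝ) ≤ max 0 (𝒱.sup' h𝒱ne fun μ =>
          G' ℓ μ s * (μ + γ * U' (s + ℓ - 1) - γ * U' (s - 1))) := le_max_left _ _
    have hεV : (0:ℝ) ≤ ε * V := mul_nonneg hε hV.le
    -- the P-part decomposition, valid in both cases
    have hPpart : P ℓ * (γ * U (s - 1)) - P' ℓ * (γ * U' (s - 1))
        ≤ γ * (P' ℓ * K) + γ * ((P ℓ - P' ℓ) * U (s - 1)) := by
      have h := mul_le_mul_of_nonneg_left hδ0 (mul_nonneg hγ0.le hP')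
      nlinarith
    rcases le_or_gt (G ℓ μ s * (μ + γ * U (s + ℓ - 1) - γ * U (s - 1))) 0 with h0 | h0
    · have hma : max 0 (𝒱.sup' h𝒱ne fun μ =>
          G ℓ μ s * (μ + γ * U (s + ℓ - 1) - γ * U (s - 1))) = 0 := by
        rw [hsup]; exact max_eq_left h0
      rw [hma]
      linarith
    · have hxa : 0 < μ + γ * U (s + ℓ - 1) - γ * U (s - 1) := by
        rcases lt_or_ge 0 (μ + γ * U (s + ℓ - 1) - γ * U (s - 1)) with h | h
        · exact h
        · nlinarith [hGa.1]
      have hxV : μ + γ * U (s + ℓ - 1) - γ * U (s - 1) ≤ V := by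
        have hm : U (s + ℓ - 1) ≤ U (s - 1) := hUmono _ _ (by omega)
        nlinarith [hμV.2]
      have hma : max 0 (𝒱.sup' h𝒱ne fun μ =>
          G ℓ μ s * (μ + γ * U (s + ℓ - 1) - γ * U (s - 1)))
          = G ℓ μ s * (μ + γ * U (s + ℓ - 1) - γ * U (s - 1)) := by
        rw [hsup]; exact max_eq_right h0.le
      rw [hma]
      have hMb : G' ℓ μ s * (μ + γ * U' (s + ℓ - 1) - γ * U' (s - 1))
          ≤ max 0 (𝒱.sup' h𝒱ne fun μ =>
            G' ℓ μ s * (μ + γ * U' (s + ℓ - 1) - γ * U' (s - 1))) :=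
        le_trans (Finset.le_sup'
          (fun μ => G' ℓ μ s * (μ + γ * U' (s + ℓ - 1) - γ * U' (s - 1))) hμ)
          (le_max_right _ _)
      have h4 : (G ℓ μ s - G' ℓ μ s) * (μ + γ * U (s + ℓ - 1) - γ * U (s - 1))
          ≤ ε * V := by
        have ha := mul_le_mul_of_nonneg_right hclose hxa.le
        have hb := mul_le_mul_of_nonneg_left hxV hε
        linarith
      have h2 : G' ℓ μ s * (γ * (U (s + ℓ - 1) - U' (s + ℓ - 1)))
          ≤ G' ℓ μ s * (γ * K) :=
        mul_le_mul_of_nonneg_left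
          (mul_le_mul_of_nonneg_left hδ1 hγ0.le) hG'a.1
      have h3 : (P' ℓ - G' ℓ μ s) * (γ * (U (s - 1) - U' (s - 1)))
          ≤ (P' ℓ - G' ℓ μ s) * (γ * K) :=
        mul_le_mul_of_nonneg_left
          (mul_le_mul_of_nonneg_left hδ0 hγ0.le) (by linarith [hG'a.2])
      have hP2 : P ℓ * (γ * U (s - 1)) - P' ℓ * (γ * U' (s - 1))
          = (P ℓ - P' ℓ) * (γ * U (s - 1))
            + P' ℓ * (γ * (U (s - 1) - U' (s - 1))) := by ring
      have hdecomp : G ℓ μ s * (μ + γ * U (s + ℓ - 1) - γ * U (s - 1))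
            - G' ℓ μ s * (μ + γ * U' (s + ℓ - 1) - γ * U' (s - 1))
          = (G ℓ μ s - G' ℓ μ s) * (μ + γ * U (s + ℓ - 1) - γ * U (s - 1))
            + G' ℓ μ s * (γ * (U (s + ℓ - 1) - U' (s + ℓ - 1)))
            - G' ℓ μ s * (γ * (U (s - 1) - U' (s - 1))) := by ring
      have hexp2 : G' ℓ μ s * (γ * K) + (P' ℓ - G' ℓ μ s) * (γ * K)
          = γ * (P' ℓ * K) := by ring
      have hexp3 : (P ℓ - P' ℓ) * (γ * U (s - 1))
          = γ * ((P ℓ - P' ℓ) * U (s - 1)) := by ring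
      have hexp4 : P' ℓ * (γ * (U (s - 1) - U' (s - 1)))
          - G' ℓ μ s * (γ * (U (s - 1) - U' (s - 1)))
          = (P' ℓ - G' ℓ μ s) * (γ * (U (s - 1) - U' (s - 1))) := by ring
      linarith [hMb]
  have hsum := Finset.sum_le_sum perl
  rw [Finset.sum_sub_distrib] at hsum
  have hsumRHS : ∑ ℓ ∈ Finset.Icc 1 L,
      (ε * V + γ * (P' ℓ * K) + γ * ((P ℓ - P' ℓ) * U (s - 1)))
      = L * ε * V + γ * K := by
    rw [Finset.sum_add_distrib, Finset.sum_add_distrib]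
    have e1 : ∑ _ℓ ∈ Finset.Icc 1 L, ε * V = L * ε * V := by
      rw [Finset.sum_const, Nat.card_Icc]
      simp [nsmul_eq_mul]
      ring
    have e2 : ∑ ℓ ∈ Finset.Icc 1 L, γ * (P' ℓ * K) = γ * K := by
      have : ∑ ℓ ∈ Finset.Icc 1 L, γ * (P' ℓ * K)
          = (∑ ℓ ∈ Finset.Icc 1 L, P' ℓ) * (γ * K) := by
        rw [Finset.sum_mul]
        exact Finset.sum_congr rfl fun ℓ _ => by ring
      rw [this, hP'sum, one_mul]
    have e3 : ∑ ℓ ∈ Finset.Icc 1 L, γ * ((P ℓ - P' ℓ) * U (s - 1)) = 0 := by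
      have : ∑ ℓ ∈ Finset.Icc 1 L, γ * ((P ℓ - P' ℓ) * U (s - 1))
          = (∑ ℓ ∈ Finset.Icc 1 L, P ℓ - ∑ ℓ ∈ Finset.Icc 1 L, P' ℓ)
            * (γ * U (s - 1)) := by
        rw [← Finset.sum_sub_distrib, Finset.sum_mul]
        exact Finset.sum_congr rfl fun ℓ _ => by ring
      rw [this, hPsum, hP'sum, sub_self, zero_mul]
    rw [e1, e2, e3]
    ring
  rw [hsumRHS] at hsum
  rw [hUfix s, hU'fix s]
  exact hsum


/-- Infinite-horizon discounted robustness: if two models `(P,G)` and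
`(P̂,Ĝ)` are ε-close, the γ-discounted optimal value functions satisfy
`|U*_γ(s) − Û*_γ(s)| ≤ 2𝕍𝕃ε/(1−γ)`. -/
theorem stmt_12
    (L : ℕ) (hL : 1 ≤ L) (V : ℝ) (hV : 0 < V)
    (𝒱 : Finset ℝ) (h𝒱ne : 𝒱.Nonempty) (h𝒱 : ∀ μ ∈ 𝒱, 0 ≤ μ ∧ μ ≤ V)
    (γ : ℝ) (hγ0 : 0 < γ) (hγ1 : γ < 1)
    (ε : ℝ) (hε : 0 ≤ ε)
    -- the true model (P, G)
    (P : ℕ → ℝ) (G : ℕ → ℝ → ℕ → ℝ)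
    (hPnn : ∀ ℓ, 0 ≤ P ℓ) (hPsum : ∑ ℓ ∈ Finset.Icc 1 L, P ℓ = 1)
    (hG : ∀ ℓ ∈ Finset.Icc 1 L, ∀ μ ∈ 𝒱, ∀ s : ℕ, 0 ≤ G ℓ μ s ∧ G ℓ μ s ≤ P ℓ)
    (hGμ : ∀ ℓ ∈ Finset.Icc 1 L, ∀ μ μ' : ℝ, ∀ s : ℕ, μ ≤ μ' → G ℓ μ' s ≤ G ℓ μ s)
    (hGs : ∀ ℓ ∈ Finset.Icc 1 L, ∀ μ : ℝ, ∀ s s' : ℕ, s ≤ s' → G ℓ μ s' ≤ G ℓ μ s)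
    -- the estimated model (P̂, Ĝ)
    (P' : ℕ → ℝ) (G' : ℕ → ℝ → ℕ → ℝ)
    (hP'nn : ∀ ℓ, 0 ≤ P' ℓ) (hP'sum : ∑ ℓ ∈ Finset.Icc 1 L, P' ℓ = 1)
    (hG' : ∀ ℓ ∈ Finset.Icc 1 L, ∀ μ ∈ 𝒱, ∀ s : ℕ, 0 ≤ G' ℓ μ s ∧ G' ℓ μ s ≤ P' ℓ)
    (hG'μ : ∀ ℓ ∈ Finset.Icc 1 L, ∀ μ μ' : ℝ, ∀ s : ℕ, μ ≤ μ' → G' ℓ μ' s ≤ G' ℓ μ s)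
    (hG's : ∀ ℓ ∈ Finset.Icc 1 L, ∀ μ : ℝ, ∀ s s' : ℕ, s ≤ s' → G' ℓ μ s' ≤ G' ℓ μ s)
    -- ε-closeness
    (hGclose : ∀ ℓ ∈ Finset.Icc 1 L, ∀ μ ∈ 𝒱, ∀ s : ℕ, |G ℓ μ s - G' ℓ μ s| ≤ ε)
    (hPclose : ∀ ℓ ∈ Finset.Icc 1 L, |P ℓ - P' ℓ| ≤ ε)
    -- the two γ-discounted optimal value functions (Bellman fixed points)
    (U U' : ℕ → ℝ)
    (hUb : ∀ s, 0 ≤ U s ∧ U s ≤ V / (1 - γ))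
    (hU'b : ∀ s, 0 ≤ U' s ∧ U' s ≤ V / (1 - γ))
    (hUfix : ∀ s, U s =
      ∑ ℓ ∈ Finset.Icc 1 L,
        (max 0 (𝒱.sup' h𝒱ne fun μ =>
            G ℓ μ s * (μ + γ * U (s + ℓ - 1) - γ * U (s - 1)))
          + P ℓ * (γ * U (s - 1))))
    (hU'fix : ∀ s, U' s =
      ∑ ℓ ∈ Finset.Icc 1 L,
        (max 0 (𝒱.sup' h𝒱ne fun μ =>
            G' ℓ μ s * (μ + γ * U' (s + ℓ - 1) - γ * U' (s - 1)))
          + P' ℓ * (γ * U' (s - 1)))) :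
    ∀ s : ℕ, |U s - U' s| ≤ 2 * V * L * ε / (1 - γ) := by
  have h1γ : 0 < 1 - γ := by linarith
  have hUmono : ∀ a b : ℕ, b ≤ a → U a ≤ U b :=
    stmt12_aux_mono L V 𝒱 h𝒱ne h𝒱 γ hγ0 hγ1 P G hPnn hPsum hG hGs U hUb hUfix
  have hU'mono : ∀ a b : ℕ, b ≤ a → U' a ≤ U' b :=
    stmt12_aux_mono L V 𝒱 h𝒱ne h𝒱 γ hγ0 hγ1 P' G' hP'nn hP'sum hG' hG's U' hU'b hU'fix
  have hG'close : ∀ ℓ ∈ Finset.Icc 1 L, ∀ μ ∈ 𝒱, ∀ s : ℕ, G' ℓ μ s - G ℓ μ s ≤ ε :=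
    fun ℓ hℓ μ hμ s => by
      have := hGclose ℓ hℓ μ hμ s
      rw [abs_sub_comm] at this
      exact (abs_le.mp this).2
  have hGclose' : ∀ ℓ ∈ Finset.Icc 1 L, ∀ μ ∈ 𝒱, ∀ s : ℕ, G ℓ μ s - G' ℓ μ s ≤ ε :=
    fun ℓ hℓ μ hμ s => (abs_le.mp (hGclose ℓ hℓ μ hμ s)).2
  have key : ∀ n : ℕ, ∀ s : ℕ,
      |U s - U' s| ≤ L * ε * V / (1 - γ) + γ ^ n * (V / (1 - γ)) := by
    intro n
    induction n with
    | zero =>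
      intro s
      have h1 := (hUb s).1
      have h2 := (hUb s).2
      have h3 := (hU'b s).1
      have h4 := (hU'b s).2
      have hA : (0:ℝ) ≤ L * ε * V / (1 - γ) := by positivity
      rw [abs_le]
      constructor <;> simp <;> nlinarith
    | succ n ih =>
      intro s
      have hfwd : U s - U' s
          ≤ L * ε * V + γ * (L * ε * V / (1 - γ) + γ ^ n * (V / (1 - γ))) :=
        stmt12_aux_onesided L V hV 𝒱 h𝒱ne h𝒱 γ hγ0 hγ1 ε hε
          P G hPsum hG P' G' hP'nn hP'sum hG' hGclose' U U' hUmono hUfix hU'fix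
          _ (fun t => (abs_le.mp (ih t)).2) s
      have hbwd : U' s - U s
          ≤ L * ε * V + γ * (L * ε * V / (1 - γ) + γ ^ n * (V / (1 - γ))) :=
        stmt12_aux_onesided L V hV 𝒱 h𝒱ne h𝒱 γ hγ0 hγ1 ε hε
          P' G' hP'sum hG' P G hPnn hPsum hG hG'close U' U hU'mono hU'fix hUfix
          _ (fun t => by have := (abs_le.mp (ih t)).1; linarith) s
      have heq : L * ε * V + γ * (L * ε * V / (1 - γ) + γ ^ n * (V / (1 - γ)))
          = L * ε * V / (1 - γ) + γ ^ (n + 1) * (V / (1 - γ)) := by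
        field_simp
        ring
      rw [abs_le]
      constructor <;> linarith
  intro s
  have hten : Filter.Tendsto
      (fun n : ℕ => L * ε * V / (1 - γ) + γ ^ n * (V / (1 - γ)))
      Filter.atTop (nhds (L * ε * V / (1 - γ))) := by
    have h := (tendsto_pow_atTop_nhds_zero_of_lt_one hγ0.le hγ1).mul_const (V / (1 - γ))
    rw [zero_mul] at h
    simpa using (tendsto_const_nhds (x := L * ε * V / (1 - γ))).add h
  have hlim : |U s - U' s| ≤ L * ε * V / (1 - γ) :=
    ge_of_tendsto hten (Filter.Eventually.of_forall fun n => key n s)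
  have hnum : (L:ℝ) * ε * V ≤ 2 * V * L * ε := by nlinarith [mul_nonneg (mul_nonneg hε hV.le) (Nat.cast_nonneg (α := ℝ) L)]
  calc |U s - U' s| ≤ L * ε * V / (1 - γ) := hlim
    _ ≤ 2 * V * L * ε / (1 - γ) := by
        exact (div_le_div_iff_of_pos_right h1γ).mpr hnum
end

section
/- For every t ∈ {0,…,T} and every state s ∈ ℕ: 0 ≤ U(t,s) − U^η(t,s) ≤ (T−t)·η, where U is the optimal value function with prices ranging over the full interval [0,𝕍] and U^η is the optimal value function with prices restricted to the grid of multiples of η. -/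
lemma aux_disc (V η : ℝ) (hV : 0 < V) (hη : 0 < η)
    (g : ℝ → ℝ) (hg0 : ∀ μ, 0 ≤ g μ) (hg1 : ∀ μ, g μ ≤ 1)
    (hgm : ∀ μ μ', μ ≤ μ' → g μ' ≤ g μ)
    (Ua Ub Ga Gb C : ℝ) (hC : 0 ≤ C)
    (ha0 : 0 ≤ Ua - Ga) (ha1 : Ua - Ga ≤ C)
    (hb0 : 0 ≤ Ub - Gb) (hb1 : Ub - Gb ≤ C) :
    0 ≤ (max 0 (⨆ μ : Set.Icc (0:ℝ) V, g μ.1 * (μ.1 + Ua - Ub)) + Ub)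
        - (max 0 (⨆ k : Fin (Nat.floor (V/η) + 1), g (k.1*η) * (k.1*η + Ga - Gb)) + Gb)
      ∧ (max 0 (⨆ μ : Set.Icc (0:ℝ) V, g μ.1 * (μ.1 + Ua - Ub)) + Ub)
        - (max 0 (⨆ k : Fin (Nat.floor (V/η) + 1), g (k.1*η) * (k.1*η + Ga - Gb)) + Gb)
        ≤ C + η := by
  haveI instNE : Nonempty (Set.Icc (0:ℝ) V) := ⟨⟨0, Set.mem_Icc.2 ⟨le_refl 0, hV.le⟩⟩⟩
  set S := ⨆ μ : Set.Icc (0:ℝ) V, g μ.1 * (μ.1 + Ua - Ub) with hS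
  set G := ⨆ k : Fin (Nat.floor (V/η) + 1), g (k.1*η) * (k.1*η + Ga - Gb) with hG
  have hBdd : BddAbove (Set.range fun μ : Set.Icc (0:ℝ) V => g μ.1 * (μ.1 + Ua - Ub)) := by
    refine ⟨max 0 (V + Ua - Ub), ?_⟩
    rintro x ⟨μ, rfl⟩
    rcases le_or_gt (μ.1 + Ua - Ub) 0 with h | h
    · exact le_trans (mul_nonpos_of_nonneg_of_nonpos (hg0 _) h) (le_max_left _ _)
    · have h1 : g μ.1 * (μ.1 + Ua - Ub) ≤ μ.1 + Ua - Ub := by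
        nlinarith [hg1 μ.1, hg0 μ.1]
      have h2 : μ.1 ≤ V := μ.2.2
      exact le_trans (show g μ.1 * (μ.1 + Ua - Ub) ≤ V + Ua - Ub by linarith) (le_max_right _ _)
  have hGbdd : BddAbove (Set.range fun k : Fin (Nat.floor (V/η) + 1) =>
      g (k.1*η) * (k.1*η + Ga - Gb)) := Set.Finite.bddAbove (Set.finite_range _)
  -- lower bound
  have hlow : G ≤ max 0 S + (Ub - Gb) := by
    apply ciSup_le
    intro k
    have hk0 : (0:ℝ) ≤ (k.1:ℝ) * η := by positivity
    have hkV : (k.1:ℝ) * η ≤ V := by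
      have hk : (k.1:ℝ) ≤ Nat.floor (V/η) := by exact_mod_cast Nat.lt_succ_iff.1 k.2
      have : (Nat.floor (V/η) : ℝ) ≤ V / η := Nat.floor_le (div_nonneg hV.le hη.le)
      calc (k.1:ℝ) * η ≤ (V/η) * η := by nlinarith
        _ = V := div_mul_cancel₀ V (ne_of_gt hη)
    have h1 : g ((k.1:ℝ)*η) * ((k.1:ℝ)*η + Ua - Ub) ≤ S :=
      le_ciSup hBdd (⟨(k.1:ℝ)*η, Set.mem_Icc.2 ⟨hk0, hkV⟩⟩ : Set.Icc (0:ℝ) V)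
    have h2 : g ((k.1:ℝ)*η) * ((k.1:ℝ)*η + Ga - Gb)
        ≤ g ((k.1:ℝ)*η) * ((k.1:ℝ)*η + Ua - Ub) + (Ub - Gb) := by
      nlinarith [mul_nonneg (hg0 ((k.1:ℝ)*η)) ha0,
        mul_nonneg (sub_nonneg.2 (hg1 ((k.1:ℝ)*η))) hb0]
    have h3 : S ≤ max 0 S := le_max_right _ _
    linarith
  have hmaxlow : max 0 G ≤ max 0 S + (Ub - Gb) := by
    apply max_le _ hlow
    have : (0:ℝ) ≤ max 0 S := le_max_left _ _
    linarith
  constructor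
  · linarith
  -- upper bound
  · have hup : S ≤ max 0 G + (C + η - (Ub - Gb)) := by
      apply ciSup_le
      rintro ⟨μ, hμ⟩
      obtain ⟨hμ0, hμV⟩ := Set.mem_Icc.1 hμ
      set k := Nat.floor (μ/η) with hk
      have hkN : k < Nat.floor (V/η) + 1 :=
        Nat.lt_succ_of_le (Nat.floor_mono ((div_le_div_iff_of_pos_right hη).2 hμV))
      have hkμ : (k:ℝ) * η ≤ μ := by
        have := Nat.floor_le (div_nonneg hμ0 hη.le)
        calc (k:ℝ)*η ≤ (μ/η)*η := by nlinarith
          _ = μ := div_mul_cancel₀ μ (ne_of_gt hη)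
      have hμk : μ < (k:ℝ) * η + η := by
        have h := Nat.lt_floor_add_one (μ/η)
        have := (div_lt_iff₀ hη).1 h
        nlinarith
      have hmaxG0 : (0:ℝ) ≤ max 0 G := le_max_left _ _
      rcases le_or_gt (μ + Ua - Ub) 0 with h | h
      · have : g μ * (μ + Ua - Ub) ≤ 0 := mul_nonpos_of_nonneg_of_nonpos (hg0 _) h
        linarith
      · have hgm' : g μ ≤ g ((k:ℝ)*η) := hgm _ _ hkμ
        have step1 : g μ * (μ + Ua - Ub) ≤ g ((k:ℝ)*η) * (μ + Ua - Ub) :=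
          mul_le_mul_of_nonneg_right hgm' h.le
        have hgrid : g ((k:ℝ)*η) * ((k:ℝ)*η + Ga - Gb) ≤ G :=
          le_ciSup hGbdd (⟨k, hkN⟩ : Fin (Nat.floor (V/η) + 1))
        have hgrid' : g ((k:ℝ)*η) * ((k:ℝ)*η + Ga - Gb) ≤ max 0 G :=
          le_trans hgrid (le_max_right _ _)
        have decomp : g ((k:ℝ)*η) * (μ + Ua - Ub)
            = g ((k:ℝ)*η) * ((k:ℝ)*η + Ga - Gb)
              + g ((k:ℝ)*η) * ((μ - (k:ℝ)*η) + (Ua - Ga) - (Ub - Gb)) := by ring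
        rcases le_or_gt ((μ - (k:ℝ)*η) + (Ua - Ga) - (Ub - Gb)) 0 with hy | hy
        · have : g ((k:ℝ)*η) * ((μ - (k:ℝ)*η) + (Ua - Ga) - (Ub - Gb)) ≤ 0 :=
            mul_nonpos_of_nonneg_of_nonpos (hg0 _) hy
          linarith
        · have hy2 : g ((k:ℝ)*η) * ((μ - (k:ℝ)*η) + (Ua - Ga) - (Ub - Gb))
              ≤ (μ - (k:ℝ)*η) + (Ua - Ga) - (Ub - Gb) := by
            nlinarith [hg1 ((k:ℝ)*η), hg0 ((k:ℝ)*η)]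
          linarith
    have hmaxup : max 0 S ≤ max 0 G + (C + η - (Ub - Gb)) := by
      apply max_le _ hup
      have : (0:ℝ) ≤ max 0 G := le_max_left _ _
      linarith
    linarith

/-- Price-grid discretization: restricting prices from `[0,𝕍]` to the grid
of multiples of `η` loses at most `η` per remaining time step:
`0 ≤ U(t,s) − U^η(t,s) ≤ (T−t)·η`. -/
theorem stmt_16
    (T L : ℕ) (hL : 1 ≤ L)
    (P : ℕ → ℝ) (hPnn : ∀ ℓ, 0 ≤ P ℓ)
    (hPsum : ∑ ℓ ∈ Finset.Icc 1 L, P ℓ = 1)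
    (V : ℝ) (hV : 0 < V) (η : ℝ) (hη : 0 < η)
    (q : ℝ → ℕ → ℕ → ℝ)
    (hq01 : ∀ μ s ℓ, 0 ≤ q μ s ℓ ∧ q μ s ℓ ≤ 1)
    (hqμ : ∀ μ μ' s ℓ, μ ≤ μ' → q μ' s ℓ ≤ q μ s ℓ)
    -- optimal value function with prices in [0, V]
    (U : ℕ → ℕ → ℝ)
    (hUT : ∀ s, U T s = 0)
    (hU : ∀ t, t < T → ∀ s, U t s =
      ∑ ℓ ∈ Finset.Icc 1 L, P ℓ *
        (max 0 (⨆ μ : Set.Icc (0 : ℝ) V,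
            q μ.1 s ℓ * (μ.1 + U (t + 1) (s + ℓ - 1) - U (t + 1) (s - 1)))
          + U (t + 1) (s - 1)))
    -- optimal value function with prices on the grid {k·η : k·η ≤ V}
    (Ug : ℕ → ℕ → ℝ)
    (hUgT : ∀ s, Ug T s = 0)
    (hUg : ∀ t, t < T → ∀ s, Ug t s =
      ∑ ℓ ∈ Finset.Icc 1 L, P ℓ *
        (max 0 (⨆ k : Fin (Nat.floor (V / η) + 1),
            q (k.1 * η) s ℓ * (k.1 * η + Ug (t + 1) (s + ℓ - 1) - Ug (t + 1) (s - 1)))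
          + Ug (t + 1) (s - 1))) :
    ∀ t, t ≤ T → ∀ s : ℕ,
      0 ≤ U t s - Ug t s ∧ U t s - Ug t s ≤ ((T - t : ℕ) : ℝ) * η := by
  suffices key : ∀ n, ∀ t, t ≤ T → T - t = n → ∀ s : ℕ,
      0 ≤ U t s - Ug t s ∧ U t s - Ug t s ≤ ((T - t : ℕ) : ℝ) * η by
    intro t ht s; exact key (T - t) t ht rfl s
  intro n
  induction n with
  | zero =>
    intro t ht hn s
    have : t = T := by omega
    subst this
    constructor <;> simp [hUT, hUgT]
  | succ n ih =>
    intro t ht hn s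
    have htT : t < T := by omega
    have hterm : ∀ ℓ ∈ Finset.Icc 1 L,
        0 ≤ (max 0 (⨆ μ : Set.Icc (0 : ℝ) V,
              q μ.1 s ℓ * (μ.1 + U (t + 1) (s + ℓ - 1) - U (t + 1) (s - 1)))
            + U (t + 1) (s - 1))
          - (max 0 (⨆ k : Fin (Nat.floor (V / η) + 1),
              q (k.1 * η) s ℓ * (k.1 * η + Ug (t + 1) (s + ℓ - 1) - Ug (t + 1) (s - 1)))
            + Ug (t + 1) (s - 1))
        ∧ (max 0 (⨆ μ : Set.Icc (0 : ℝ) V,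
              q μ.1 s ℓ * (μ.1 + U (t + 1) (s + ℓ - 1) - U (t + 1) (s - 1)))
            + U (t + 1) (s - 1))
          - (max 0 (⨆ k : Fin (Nat.floor (V / η) + 1),
              q (k.1 * η) s ℓ * (k.1 * η + Ug (t + 1) (s + ℓ - 1) - Ug (t + 1) (s - 1)))
            + Ug (t + 1) (s - 1)) ≤ (n : ℝ) * η + η := by
      intro ℓ _
      have hta : t + 1 ≤ T := by omega
      have htn : T - (t + 1) = n := by omega
      have iha := ih (t + 1) hta htn (s + ℓ - 1)
      have ihb := ih (t + 1) hta htn (s - 1)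
      rw [htn] at iha ihb
      exact aux_disc V η hV hη (fun μ => q μ s ℓ)
        (fun μ => (hq01 μ s ℓ).1) (fun μ => (hq01 μ s ℓ).2)
        (fun μ μ' h => hqμ μ μ' s ℓ h)
        (U (t+1) (s+ℓ-1)) (U (t+1) (s-1)) (Ug (t+1) (s+ℓ-1)) (Ug (t+1) (s-1))
        ((n : ℝ) * η) (by positivity)
        iha.1 iha.2 ihb.1 ihb.2
    rw [hU t htT s, hUg t htT s, ← Finset.sum_sub_distrib]
    have heq : ∀ ℓ ∈ Finset.Icc 1 L,
        P ℓ * (max 0 (⨆ μ : Set.Icc (0 : ℝ) V,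
              q μ.1 s ℓ * (μ.1 + U (t + 1) (s + ℓ - 1) - U (t + 1) (s - 1)))
            + U (t + 1) (s - 1))
          - P ℓ * (max 0 (⨆ k : Fin (Nat.floor (V / η) + 1),
              q (k.1 * η) s ℓ * (k.1 * η + Ug (t + 1) (s + ℓ - 1) - Ug (t + 1) (s - 1)))
            + Ug (t + 1) (s - 1))
        = P ℓ * ((max 0 (⨆ μ : Set.Icc (0 : ℝ) V,
              q μ.1 s ℓ * (μ.1 + U (t + 1) (s + ℓ - 1) - U (t + 1) (s - 1)))
            + U (t + 1) (s - 1))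
          - (max 0 (⨆ k : Fin (Nat.floor (V / η) + 1),
              q (k.1 * η) s ℓ * (k.1 * η + Ug (t + 1) (s + ℓ - 1) - Ug (t + 1) (s - 1)))
            + Ug (t + 1) (s - 1))) := fun ℓ _ => by ring
    rw [Finset.sum_congr rfl heq]
    constructor
    · apply Finset.sum_nonneg
      intro ℓ hℓ
      exact mul_nonneg (hPnn ℓ) (hterm ℓ hℓ).1
    · have hcast : ((T - t : ℕ) : ℝ) * η = (n : ℝ) * η + η := by
        rw [hn]; push_cast; ring
      rw [hcast]
      calc ∑ ℓ ∈ Finset.Icc 1 L, P ℓ * _ ≤ ∑ ℓ ∈ Finset.Icc 1 L, P ℓ * ((n : ℝ) * η + η) := by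
            apply Finset.sum_le_sum
            intro ℓ hℓ
            exact mul_le_mul_of_nonneg_left (hterm ℓ hℓ).2 (hPnn ℓ)
        _ = (n : ℝ) * η + η := by rw [← Finset.sum_mul, hPsum, one_mul]
end

section
/- Fix a discount factor γ ∈ (0,1). Let U_γ and U^η_γ be functions ℕ → ℝ with values in [0, 𝕍/(1−γ)] satisfying the γ-discounted Bellman fixed-point equation with prices ranging over [0,𝕍] and over the grid {k·η : k ∈ ℕ, k·η ≤ 𝕍}, respectively. Then for every state s ∈ ℕ: 0 ≤ U_γ(s) − U^η_γ(s) ≤ η/(1−γ). -/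
/-- Discounted price-grid discretization: for γ-discounted Bellman fixed
points with prices in `[0,𝕍]` and on the grid of multiples of `η` respectively,
`0 ≤ U_γ(s) − U^η_γ(s) ≤ η/(1−γ)`. -/
theorem stmt_17
    (L : ℕ) (hL : 1 ≤ L)
    (P : ℕ → ℝ) (hPnn : ∀ ℓ, 0 ≤ P ℓ)
    (hPsum : ∑ ℓ ∈ Finset.Icc 1 L, P ℓ = 1)
    (V : ℝ) (hV : 0 < V) (η : ℝ) (hη : 0 < η)
    (γ : ℝ) (hγ0 : 0 < γ) (hγ1 : γ < 1)
    (q : ℝ → ℕ → ℕ → ℝ)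
    (hq01 : ∀ μ s ℓ, 0 ≤ q μ s ℓ ∧ q μ s ℓ ≤ 1)
    (hqμ : ∀ μ μ' s ℓ, μ ≤ μ' → q μ' s ℓ ≤ q μ s ℓ)
    -- γ-discounted Bellman fixed point with prices in [0, V]
    (U : ℕ → ℝ)
    (hUb : ∀ s, 0 ≤ U s ∧ U s ≤ V / (1 - γ))
    (hUfix : ∀ s, U s =
      ∑ ℓ ∈ Finset.Icc 1 L, P ℓ *
        (max 0 (⨆ μ : Set.Icc (0 : ℝ) V,
            q μ.1 s ℓ * (μ.1 + γ * U (s + ℓ - 1) - γ * U (s - 1)))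
          + γ * U (s - 1)))
    -- γ-discounted Bellman fixed point with prices on the grid {k·η : k·η ≤ V}
    (Ug : ℕ → ℝ)
    (hUgb : ∀ s, 0 ≤ Ug s ∧ Ug s ≤ V / (1 - γ))
    (hUgfix : ∀ s, Ug s =
      ∑ ℓ ∈ Finset.Icc 1 L, P ℓ *
        (max 0 (⨆ k : Fin (Nat.floor (V / η) + 1),
            q (k.1 * η) s ℓ * (k.1 * η + γ * Ug (s + ℓ - 1) - γ * Ug (s - 1)))
          + γ * Ug (s - 1))) :
    ∀ s : ℕ, 0 ≤ U s - Ug s ∧ U s - Ug s ≤ η / (1 - γ) := by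
  
  have h1γ : (0:ℝ) < 1 - γ := by linarith
  haveI : Nonempty (Set.Icc (0 : ℝ) V) := ⟨⟨0, le_refl _, hV.le⟩⟩
  -- boundedness of the full-price supremum
  have hbF : ∀ s ℓ, BddAbove (Set.range fun μ : Set.Icc (0 : ℝ) V =>
      q μ.1 s ℓ * (μ.1 + γ * U (s + ℓ - 1) - γ * U (s - 1))) := by
    intro s ℓ
    refine ⟨V + γ * (V / (1 - γ)), ?_⟩
    rintro x ⟨μ, rfl⟩
    obtain ⟨hq0, hq1⟩ := hq01 μ.1 s ℓ
    have hUa := hUb (s + ℓ - 1)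
    have hUb' := hUb (s - 1)
    have hμV := μ.2.2
    have hDnn : (0:ℝ) ≤ V / (1 - γ) := div_nonneg hV.le h1γ.le
    have hgUa : γ * U (s + ℓ - 1) ≤ γ * (V / (1 - γ)) :=
      mul_le_mul_of_nonneg_left hUa.2 hγ0.le
    have hgUb : 0 ≤ γ * U (s - 1) := mul_nonneg hγ0.le hUb'.1
    by_cases hpos : 0 ≤ μ.1 + γ * U (s + ℓ - 1) - γ * U (s - 1)
    · have h1 : q μ.1 s ℓ * (μ.1 + γ * U (s + ℓ - 1) - γ * U (s - 1))
          ≤ μ.1 + γ * U (s + ℓ - 1) - γ * U (s - 1) :=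
        mul_le_of_le_one_left hpos hq1
      linarith
    · have h1 : q μ.1 s ℓ * (μ.1 + γ * U (s + ℓ - 1) - γ * U (s - 1)) ≤ 0 :=
        mul_nonpos_of_nonneg_of_nonpos hq0 (le_of_not_ge hpos)
      have h2 : 0 ≤ γ * (V / (1 - γ)) := mul_nonneg hγ0.le hDnn
      linarith
  -- sup/inf of the difference
  have hneR : (Set.range fun t => U t - Ug t).Nonempty := ⟨U 0 - Ug 0, 0, rfl⟩
  have hbdA : BddAbove (Set.range fun t => U t - Ug t) := by
    refine ⟨V / (1 - γ), ?_⟩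
    rintro x ⟨t, rfl⟩
    have := (hUb t).2; have := (hUgb t).1
    simp only; linarith
  have hbdB : BddBelow (Set.range fun t => U t - Ug t) := by
    refine ⟨-(V / (1 - γ)), ?_⟩
    rintro x ⟨t, rfl⟩
    have := (hUb t).1; have := (hUgb t).2
    simp only; linarith
  set M := sSup (Set.range fun t => U t - Ug t) with hMdef
  set m := sInf (Set.range fun t => U t - Ug t) with hmdef
  have hdM : ∀ t, U t - Ug t ≤ M := fun t => le_csSup hbdA ⟨t, rfl⟩
  have hmd : ∀ t, m ≤ U t - Ug t := fun t => csInf_le hbdB ⟨t, rfl⟩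
  -- key pointwise inequalities per (s, ℓ)
  have claimA : ∀ s ℓ,
      (max 0 (⨆ μ : Set.Icc (0 : ℝ) V,
          q μ.1 s ℓ * (μ.1 + γ * U (s + ℓ - 1) - γ * U (s - 1))) + γ * U (s - 1))
        - (max 0 (⨆ k : Fin (Nat.floor (V / η) + 1),
          q (k.1 * η) s ℓ * (k.1 * η + γ * Ug (s + ℓ - 1) - γ * Ug (s - 1)))
          + γ * Ug (s - 1)) ≤ η + γ * M := by
    intro s ℓ
    set SG := ⨆ k : Fin (Nat.floor (V / η) + 1),
        q (k.1 * η) s ℓ * (k.1 * η + γ * Ug (s + ℓ - 1) - γ * Ug (s - 1)) with hSGdef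
    have hSG0 : SG ≤ max 0 SG := le_max_right _ _
    have h0SG : (0:ℝ) ≤ max 0 SG := le_max_left _ _
    have hMb := hdM (s - 1)
    have hsup : (⨆ μ : Set.Icc (0 : ℝ) V,
        q μ.1 s ℓ * (μ.1 + γ * U (s + ℓ - 1) - γ * U (s - 1)))
        ≤ max 0 SG + η + γ * M - γ * (U (s - 1) - Ug (s - 1)) := by
      apply ciSup_le
      rintro ⟨μ, hμ0, hμV⟩
      simp only
      set k : ℕ := Nat.floor (μ / η) with hkdef
      have hk1 : (k:ℝ) * η ≤ μ := by
        have h := Nat.floor_le (show 0 ≤ μ / η from div_nonneg hμ0 hη.le)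
        have := (le_div_iff₀ hη).mp h
        linarith
      have hk2 : μ ≤ (k:ℝ) * η + η := by
        have h := Nat.lt_floor_add_one (μ / η)
        have h2 := (div_lt_iff₀ hη).mp h
        push_cast at h2 ⊢
        nlinarith
      have hkle : k ≤ Nat.floor (V / η) := by
        apply Nat.floor_le_floor
        gcongr
      have hmem : q ((k:ℝ) * η) s ℓ * ((k:ℝ) * η + γ * Ug (s + ℓ - 1) - γ * Ug (s - 1)) ≤ SG := by
        rw [hSGdef]
        exact le_ciSup (f := fun k : Fin (Nat.floor (V / η) + 1) =>
            q (k.1 * η) s ℓ * (k.1 * η + γ * Ug (s + ℓ - 1) - γ * Ug (s - 1)))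
          (Set.finite_range _).bddAbove ⟨k, Nat.lt_succ_of_le hkle⟩
      obtain ⟨hqμ0, hqμ1⟩ := hq01 μ s ℓ
      obtain ⟨hqk0, hqk1⟩ := hq01 ((k:ℝ) * η) s ℓ
      have hqle : q μ s ℓ ≤ q ((k:ℝ) * η) s ℓ := hqμ _ _ _ _ hk1
      have hMa := hdM (s + ℓ - 1)
      have p1 : 0 ≤ γ * q μ s ℓ * (M - (U (s + ℓ - 1) - Ug (s + ℓ - 1))) :=
        mul_nonneg (mul_nonneg hγ0.le hqμ0) (by linarith)
      have p2 : 0 ≤ γ * (1 - q μ s ℓ) * (M - (U (s - 1) - Ug (s - 1))) :=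
        mul_nonneg (mul_nonneg hγ0.le (by linarith)) (by linarith)
      by_cases hpos : 0 ≤ μ + γ * Ug (s + ℓ - 1) - γ * Ug (s - 1)
      · have e1 : q μ s ℓ * (μ + γ * Ug (s + ℓ - 1) - γ * Ug (s - 1))
            ≤ q ((k:ℝ) * η) s ℓ * (μ + γ * Ug (s + ℓ - 1) - γ * Ug (s - 1)) :=
          mul_le_mul_of_nonneg_right hqle hpos
        have e2 : q ((k:ℝ) * η) s ℓ * (μ + γ * Ug (s + ℓ - 1) - γ * Ug (s - 1))
            ≤ q ((k:ℝ) * η) s ℓ * ((k:ℝ) * η + γ * Ug (s + ℓ - 1) - γ * Ug (s - 1))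
              + q ((k:ℝ) * η) s ℓ * η := by nlinarith
        have e3 : q ((k:ℝ) * η) s ℓ * η ≤ η := by nlinarith
        have hexp : q μ s ℓ * (μ + γ * U (s + ℓ - 1) - γ * U (s - 1))
            = q μ s ℓ * (μ + γ * Ug (s + ℓ - 1) - γ * Ug (s - 1))
              + γ * q μ s ℓ * (U (s + ℓ - 1) - Ug (s + ℓ - 1))
              - γ * q μ s ℓ * (U (s - 1) - Ug (s - 1)) := by ring
        linarith [e1, e2, e3, hmem, hSG0, p1, p2]
      · have e1 : q μ s ℓ * (μ + γ * Ug (s + ℓ - 1) - γ * Ug (s - 1)) ≤ 0 :=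
          mul_nonpos_of_nonneg_of_nonpos hqμ0 (le_of_not_ge hpos)
        have hexp : q μ s ℓ * (μ + γ * U (s + ℓ - 1) - γ * U (s - 1))
            = q μ s ℓ * (μ + γ * Ug (s + ℓ - 1) - γ * Ug (s - 1))
              + γ * q μ s ℓ * (U (s + ℓ - 1) - Ug (s + ℓ - 1))
              - γ * q μ s ℓ * (U (s - 1) - Ug (s - 1)) := by ring
        linarith [e1, h0SG, p1, p2, hη.le]
    have h0case : (0:ℝ) ≤ max 0 SG + η + γ * M - γ * (U (s - 1) - Ug (s - 1)) := by
      have : γ * (U (s - 1) - Ug (s - 1)) ≤ γ * M := mul_le_mul_of_nonneg_left hMb hγ0.le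
      linarith
    have hmax := max_le h0case hsup
    linarith [hmax]
  have claimB : ∀ s ℓ,
      γ * m ≤ (max 0 (⨆ μ : Set.Icc (0 : ℝ) V,
          q μ.1 s ℓ * (μ.1 + γ * U (s + ℓ - 1) - γ * U (s - 1))) + γ * U (s - 1))
        - (max 0 (⨆ k : Fin (Nat.floor (V / η) + 1),
          q (k.1 * η) s ℓ * (k.1 * η + γ * Ug (s + ℓ - 1) - γ * Ug (s - 1)))
          + γ * Ug (s - 1)) := by
    intro s ℓ
    set SF := ⨆ μ : Set.Icc (0 : ℝ) V,
        q μ.1 s ℓ * (μ.1 + γ * U (s + ℓ - 1) - γ * U (s - 1)) with hSFdef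
    have hSF0 : SF ≤ max 0 SF := le_max_right _ _
    have h0SF : (0:ℝ) ≤ max 0 SF := le_max_left _ _
    have hmb := hmd (s - 1)
    have hsup : (⨆ k : Fin (Nat.floor (V / η) + 1),
        q (k.1 * η) s ℓ * (k.1 * η + γ * Ug (s + ℓ - 1) - γ * Ug (s - 1)))
        ≤ max 0 SF + γ * (U (s - 1) - Ug (s - 1)) - γ * m := by
      apply ciSup_le
      rintro ⟨k, hk⟩
      simp only
      have hkle : k ≤ Nat.floor (V / η) := Nat.lt_succ_iff.mp hk
      have hkV : (k:ℝ) * η ≤ V := by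
        have h1 : (k:ℝ) ≤ (Nat.floor (V / η) : ℝ) := by exact_mod_cast hkle
        have h2 : ((Nat.floor (V / η) : ℕ) : ℝ) ≤ V / η :=
          Nat.floor_le (div_nonneg hV.le hη.le)
        have : (k:ℝ) ≤ V / η := le_trans h1 h2
        exact (le_div_iff₀ hη).mp this
      have hk0 : (0:ℝ) ≤ (k:ℝ) * η := mul_nonneg (Nat.cast_nonneg _) hη.le
      have hmemF : q ((k:ℝ) * η) s ℓ * ((k:ℝ) * η + γ * U (s + ℓ - 1) - γ * U (s - 1)) ≤ SF := by
        rw [hSFdef]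
        exact le_ciSup (hbF s ℓ) (⟨(k:ℝ) * η, hk0, hkV⟩ : Set.Icc (0:ℝ) V)
      obtain ⟨hqk0, hqk1⟩ := hq01 ((k:ℝ) * η) s ℓ
      have hma := hmd (s + ℓ - 1)
      have p1 : 0 ≤ γ * q ((k:ℝ) * η) s ℓ * ((U (s + ℓ - 1) - Ug (s + ℓ - 1)) - m) :=
        mul_nonneg (mul_nonneg hγ0.le hqk0) (by linarith)
      have p2 : 0 ≤ γ * (1 - q ((k:ℝ) * η) s ℓ) * ((U (s - 1) - Ug (s - 1)) - m) :=
        mul_nonneg (mul_nonneg hγ0.le (by linarith)) (by linarith)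
      have hexp : q ((k:ℝ) * η) s ℓ * ((k:ℝ) * η + γ * Ug (s + ℓ - 1) - γ * Ug (s - 1))
          = q ((k:ℝ) * η) s ℓ * ((k:ℝ) * η + γ * U (s + ℓ - 1) - γ * U (s - 1))
            - γ * q ((k:ℝ) * η) s ℓ * (U (s + ℓ - 1) - Ug (s + ℓ - 1))
            + γ * q ((k:ℝ) * η) s ℓ * (U (s - 1) - Ug (s - 1)) := by ring
      linarith [hmemF, hSF0, p1, p2]
    have h0case : (0:ℝ) ≤ max 0 SF + γ * (U (s - 1) - Ug (s - 1)) - γ * m := by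
      have : γ * m ≤ γ * (U (s - 1) - Ug (s - 1)) := mul_le_mul_of_nonneg_left hmb hγ0.le
      linarith
    have hmax := max_le h0case hsup
    linarith [hmax]
  -- combine via the fixed-point equations
  have keyA : ∀ s, U s - Ug s ≤ η + γ * M := by
    intro s
    have hsplit : U s - Ug s = ∑ ℓ ∈ Finset.Icc 1 L, P ℓ *
        ((max 0 (⨆ μ : Set.Icc (0 : ℝ) V,
            q μ.1 s ℓ * (μ.1 + γ * U (s + ℓ - 1) - γ * U (s - 1))) + γ * U (s - 1))
          - (max 0 (⨆ k : Fin (Nat.floor (V / η) + 1),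
            q (k.1 * η) s ℓ * (k.1 * η + γ * Ug (s + ℓ - 1) - γ * Ug (s - 1)))
            + γ * Ug (s - 1))) := by
      conv_lhs => rw [hUfix s, hUgfix s]
      rw [← Finset.sum_sub_distrib]
      exact Finset.sum_congr rfl fun ℓ _ => (mul_sub _ _ _).symm
    rw [hsplit]
    calc ∑ ℓ ∈ Finset.Icc 1 L, P ℓ *
        ((max 0 (⨆ μ : Set.Icc (0 : ℝ) V,
            q μ.1 s ℓ * (μ.1 + γ * U (s + ℓ - 1) - γ * U (s - 1))) + γ * U (s - 1))
          - (max 0 (⨆ k : Fin (Nat.floor (V / η) + 1),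
            q (k.1 * η) s ℓ * (k.1 * η + γ * Ug (s + ℓ - 1) - γ * Ug (s - 1)))
            + γ * Ug (s - 1)))
        ≤ ∑ ℓ ∈ Finset.Icc 1 L, P ℓ * (η + γ * M) :=
          Finset.sum_le_sum fun ℓ _ =>
            mul_le_mul_of_nonneg_left (claimA s ℓ) (hPnn ℓ)
      _ = η + γ * M := by rw [← Finset.sum_mul, hPsum, one_mul]
  have keyB : ∀ s, γ * m ≤ U s - Ug s := by
    intro s
    have hsplit : U s - Ug s = ∑ ℓ ∈ Finset.Icc 1 L, P ℓ *
        ((max 0 (⨆ μ : Set.Icc (0 : ℝ) V,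
            q μ.1 s ℓ * (μ.1 + γ * U (s + ℓ - 1) - γ * U (s - 1))) + γ * U (s - 1))
          - (max 0 (⨆ k : Fin (Nat.floor (V / η) + 1),
            q (k.1 * η) s ℓ * (k.1 * η + γ * Ug (s + ℓ - 1) - γ * Ug (s - 1)))
            + γ * Ug (s - 1))) := by
      conv_lhs => rw [hUfix s, hUgfix s]
      rw [← Finset.sum_sub_distrib]
      exact Finset.sum_congr rfl fun ℓ _ => (mul_sub _ _ _).symm
    rw [hsplit]
    calc γ * m = ∑ ℓ ∈ Finset.Icc 1 L, P ℓ * (γ * m) := by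
          rw [← Finset.sum_mul, hPsum, one_mul]
      _ ≤ _ := Finset.sum_le_sum fun ℓ _ =>
          mul_le_mul_of_nonneg_left (claimB s ℓ) (hPnn ℓ)
  have hMle : M ≤ η + γ * M := csSup_le hneR (by rintro x ⟨t, rfl⟩; exact keyA t)
  have hmge : γ * m ≤ m := le_csInf hneR (by rintro x ⟨t, rfl⟩; exact keyB t)
  have hM2 : M ≤ η / (1 - γ) := by
    rw [le_div_iff₀ h1γ]
    nlinarith
  have hm2 : 0 ≤ m := by nlinarith
  intro s
  exact ⟨le_trans hm2 (hmd s), le_trans (hdM s) hM2⟩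
end
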